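/- arXiv:1603.02467 — 3 statements merged into one kernel-verified Lean document; each statement's English description precedes it below -/
import Mathlib

section
/- Arbitrary 2-structure version: a 2-structure g = (V, Υ, φ) is uniformly non-prime if and only if δ_g is a symbolic ultrametric. -/
/-- A 2-structure is modeled by a labeling `φ : V → V → Υ`; only values on
distinct pairs are relevant. A *module* of the 2-structure. -/
def IsModule {V Υ : Type*} (φ : V → V → Υ) (M : Set V) : Prop :=
  ∀ x ∈ M, ∀ y ∈ M, ∀ z ∉ M, φ x z = φ y z ∧ φ z x = φ z y

/-- A graph-module of a digraph given by its arc relation `E`. -/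
def IsGraphModule {V : Type*} (E : V → V → Prop) (M : Set V) : Prop :=
  ∀ x ∈ M, ∀ y ∈ M, ∀ z ∉ M, (E x z ↔ E y z) ∧ (E z x ↔ E z y)

/-- Two sets overlap: they intersect and neither contains the other. -/
def Overlap {V : Type*} (A B : Set V) : Prop :=
  (A ∩ B).Nonempty ∧ ¬ A ⊆ B ∧ ¬ B ⊆ A

/-- A (nonempty) module of a 2-structure. -/
def IsModuleNe {V Υ : Type*} (φ : V → V → Υ) (M : Set V) : Prop :=
  M.Nonempty ∧ IsModule φ M

/-- A strong module: a module overlapping no other module. -/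
def IsStrongModule {V Υ : Type*} (φ : V → V → Υ) (M : Set V) : Prop :=
  IsModuleNe φ M ∧ ∀ N : Set V, IsModuleNe φ N → ¬ Overlap M N

/-- The labeling of the reversible refinement `rev(g)`. -/
def revMap {V Υ : Type*} (φ : V → V → Υ) : V → V → Υ × Υ :=
  fun x y => (φ x y, φ y x)

/-- A 2-structure is reversible if equally labeled arcs have equally
labeled reverse arcs. -/
def Reversible {V Υ : Type*} (φ : V → V → Υ) : Prop :=
  ∀ x y a b : V, x ≠ y → a ≠ b → φ x y = φ a b → φ y x = φ b a

/-- The unordered pair of labels on the two arcs between `u` and `v`. -/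
def Dset {V Υ : Type*} (φ : V → V → Υ) (u v : V) : Set Υ :=
  {φ u v, φ v u}

/-- The triangle condition (U2). -/
def CondU2 {V Υ : Type*} (φ : V → V → Υ) : Prop :=
  ∀ x y z : V, x ≠ y → x ≠ z → y ≠ z →
    ({Dset φ x y, Dset φ x z, Dset φ y z} : Set (Set Υ)).ncard ≤ 2

/-- The monochromatic digraph `G_i(g)` with arcs labeled `i`. -/
def Ggraph {V Υ : Type*} (φ : V → V → Υ) (i : Υ) : V → V → Prop :=
  fun x y => x ≠ y ∧ φ x y = i

/-- A relation on `Fin n` given by an explicit arc list. -/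
def relOf {n : ℕ} (L : List (Fin n × Fin n)) : Fin n → Fin n → Prop :=
  fun k l => (k, l) ∈ L

/-- Forbidden digraph `D₃`: arcs (0,1),(1,2) only. -/
def FD3 : Fin 3 → Fin 3 → Prop := relOf [(0,1),(1,2)]
/-- Forbidden digraph `A`: an arc into an endpoint of a symmetric edge. -/
def FA : Fin 3 → Fin 3 → Prop := relOf [(0,1),(1,2),(2,1)]
/-- Forbidden digraph `B`: an arc out of an endpoint of a symmetric edge. -/
def FB : Fin 3 → Fin 3 → Prop := relOf [(0,1),(1,0),(1,2)]
/-- Forbidden digraph `D̄₃`: the complement of `D₃`. -/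
def FD3c : Fin 3 → Fin 3 → Prop := relOf [(1,0),(2,1),(0,2),(2,0)]
/-- Forbidden digraph `C₃`: a directed triangle. -/
def FC3 : Fin 3 → Fin 3 → Prop := relOf [(0,1),(1,2),(2,0)]
/-- Forbidden digraph `N`: arcs (1,0),(1,2),(3,2) only. -/
def FN : Fin 4 → Fin 4 → Prop := relOf [(1,0),(1,2),(3,2)]
/-- Forbidden digraph `N̄`: the complement of `N`. -/
def FNc : Fin 4 → Fin 4 → Prop :=
  relOf [(0,1),(2,1),(2,3),(0,2),(2,0),(0,3),(3,0),(1,3),(3,1)]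
/-- Forbidden digraph `P₄`: a symmetric path on four vertices. -/
def FP4 : Fin 4 → Fin 4 → Prop := relOf [(0,1),(1,0),(1,2),(2,1),(2,3),(3,2)]

/-- `E` contains the pattern `K` as an induced subgraph. -/
def HasInducedCopy {V : Type*} (E : V → V → Prop) {n : ℕ}
    (K : Fin n → Fin n → Prop) : Prop :=
  ∃ ι : Fin n → V, Function.Injective ι ∧
    ∀ k l : Fin n, k ≠ l → (E (ι k) (ι l) ↔ K k l)

/-- A di-cograph: a digraph with none of the eight forbidden induced
subgraphs `D₃, A, B, D̄₃, C₃, N̄, N, P₄`. -/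
def IsDiCograph {V : Type*} (E : V → V → Prop) : Prop :=
  ¬ HasInducedCopy E FD3 ∧ ¬ HasInducedCopy E FA ∧ ¬ HasInducedCopy E FB ∧
  ¬ HasInducedCopy E FD3c ∧ ¬ HasInducedCopy E FC3 ∧
  ¬ HasInducedCopy E FNc ∧ ¬ HasInducedCopy E FN ∧ ¬ HasInducedCopy E FP4

/-- Condition (U1): every monochromatic digraph is a di-cograph. -/
def CondU1 {V Υ : Type*} (φ : V → V → Υ) : Prop :=
  ∀ i : Υ, IsDiCograph (Ggraph φ i)

/-- `δ` is a symbolic ultrametric: (U1) and (U2). -/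
def SymbolicUltrametric {V Υ : Type*} (φ : V → V → Υ) : Prop :=
  CondU1 φ ∧ CondU2 φ

/-- A module of the induced substructure `g[X]`. -/
def IsModuleOn {V Υ : Type*} (φ : V → V → Υ) (X M : Set V) : Prop :=
  M ⊆ X ∧ ∀ x ∈ M, ∀ y ∈ M, ∀ z ∈ X \ M, φ x z = φ y z ∧ φ z x = φ z y

/-- The substructure `g[X]` is prime: all its modules are trivial. -/
def IsPrimeOn {V Υ : Type*} (φ : V → V → Υ) (X : Set V) : Prop :=
  ∀ M : Set V, IsModuleOn φ X M → M = ∅ ∨ (∃ v, M = {v}) ∨ M = X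

/-- Uniformly non-prime: no induced substructure on ≥ 3 vertices is prime. -/
def Unp {V Υ : Type*} (φ : V → V → Υ) : Prop :=
  ∀ X : Set V, 3 ≤ X.ncard → ¬ IsPrimeOn φ X

/-- A (nonempty) graph-module of a digraph. -/
def IsGraphModuleNe {V : Type*} (E : V → V → Prop) (M : Set V) : Prop :=
  M.Nonempty ∧ IsGraphModule E M

/-- A strong graph-module of a digraph. -/
def IsStrongGraphModule {V : Type*} (E : V → V → Prop) (M : Set V) : Prop :=
  IsGraphModuleNe E M ∧ ∀ N : Set V, IsGraphModuleNe E N → ¬ Overlap M N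

/-- The subgraph induced on `M` is (weakly) connected. -/
def ConnectedOn {V : Type*} (E : V → V → Prop) (M : Set V) : Prop :=
  ∀ x ∈ M, ∀ y ∈ M,
    Relation.ReflTransGen (fun a b => a ∈ M ∧ b ∈ M ∧ (E a b ∨ E b a)) x y

/-- `M` is a 1-cluster of (the cotree of) the di-cograph `E`: a strong module
with at least two vertices whose cotree vertex is series or order, i.e. whose
induced subgraph is weakly connected. -/
def IsOneCluster {V : Type*} (E : V → V → Prop) (M : Set V) : Prop :=
  IsStrongGraphModule E M ∧ 2 ≤ M.ncard ∧ ConnectedOn E M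

/-- `C¹(g)`: all 1-clusters of the monochromatic di-cographs together with
all singletons. -/
def OneClusters {V Υ : Type*} (φ : V → V → Υ) : Set (Set V) :=
  {M | (∃ i : Υ, IsOneCluster (Ggraph φ i) M) ∨ ∃ v : V, M = {v}}

/-- `M` is the least common ancestor module of `x` and `y`: the minimal strong
module of `g` containing both. -/
def IsLcaModule {V Υ : Type*} (φ : V → V → Υ) (x y : V) (M : Set V) : Prop :=
  IsStrongModule φ M ∧ x ∈ M ∧ y ∈ M ∧
    ∀ N : Set V, IsStrongModule φ N → x ∈ N → y ∈ N → M ⊆ N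



/-! ### Auxiliary machinery for the proof -/

section Aux

variable {V Υ : Type*} {φ : V → V → Υ}

/-! #### Injectivity helpers and induced-copy constructors -/

lemma inj3 {x y z : V} (hxy : x ≠ y) (hxz : x ≠ z) (hyz : y ≠ z) :
    Function.Injective (![x,y,z]) := by
  intro a b h
  fin_cases a <;> fin_cases b <;> simp_all (config := {decide := true})

lemma inj4 {x y z w : V} (hxy : x ≠ y) (hxz : x ≠ z) (hxw : x ≠ w)
    (hyz : y ≠ z) (hyw : y ≠ w) (hzw : z ≠ w) :
    Function.Injective (![x,y,z,w]) := by
  intro a b h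
  fin_cases a <;> fin_cases b <;> simp_all (config := {decide := true})

lemma hasFD3 {i : Υ} {x y z : V} (hxy : x ≠ y) (hxz : x ≠ z) (hyz : y ≠ z)
    (h1 : φ x y = i) (h2 : φ y z = i)
    (n1 : φ y x ≠ i) (n2 : φ z y ≠ i) (n3 : φ x z ≠ i) (n4 : φ z x ≠ i) :
    HasInducedCopy (Ggraph φ i) FD3 := by
  refine ⟨![x,y,z], inj3 hxy hxz hyz, ?_⟩
  intro k l hkl
  fin_cases k <;> fin_cases l <;>
    simp_all [Ggraph, FD3, relOf, eq_comm, Ne.symm hxy, Ne.symm hxz, Ne.symm hyz]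

lemma hasFC3 {i : Υ} {x y z : V} (hxy : x ≠ y) (hxz : x ≠ z) (hyz : y ≠ z)
    (h1 : φ x y = i) (h2 : φ y z = i) (h3 : φ z x = i)
    (n1 : φ y x ≠ i) (n2 : φ z y ≠ i) (n3 : φ x z ≠ i) :
    HasInducedCopy (Ggraph φ i) FC3 := by
  refine ⟨![x,y,z], inj3 hxy hxz hyz, ?_⟩
  intro k l hkl
  fin_cases k <;> fin_cases l <;>
    simp_all [Ggraph, FC3, relOf, eq_comm, Ne.symm hxy, Ne.symm hxz, Ne.symm hyz]

/-- FD3c with vertex map 2↦x, 0↦y, 1↦z : arcs x→z, x→y, y→x, z→y. -/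
lemma hasFD3c {i : Υ} {x y z : V} (hxy : x ≠ y) (hxz : x ≠ z) (hyz : y ≠ z)
    (h1 : φ x z = i) (h2 : φ x y = i) (h3 : φ y x = i) (h4 : φ z y = i)
    (n1 : φ z x ≠ i) (n2 : φ y z ≠ i) :
    HasInducedCopy (Ggraph φ i) FD3c := by
  refine ⟨![y,z,x], inj3 hyz (Ne.symm hxy) (Ne.symm hxz), ?_⟩
  intro k l hkl
  fin_cases k <;> fin_cases l <;>
    simp_all [Ggraph, FD3c, relOf, eq_comm, Ne.symm hxy, Ne.symm hxz, Ne.symm hyz]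

/-- N with vertex map 1↦x, 0↦y, 2↦z, 3↦w : arcs x→y, x→z, w→z. -/
lemma hasFN {i : Υ} {x y z w : V} (hxy : x ≠ y) (hxz : x ≠ z) (hxw : x ≠ w)
    (hyz : y ≠ z) (hyw : y ≠ w) (hzw : z ≠ w)
    (h1 : φ x y = i) (h2 : φ x z = i) (h3 : φ w z = i)
    (n1 : φ y x ≠ i) (n2 : φ z x ≠ i) (n3 : φ z w ≠ i)
    (n4 : φ y z ≠ i) (n5 : φ z y ≠ i) (n6 : φ y w ≠ i) (n7 : φ w y ≠ i)
    (n8 : φ x w ≠ i) (n9 : φ w x ≠ i) :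
    HasInducedCopy (Ggraph φ i) FN := by
  refine ⟨![y,x,z,w], inj4 (Ne.symm hxy) hyz hyw hxz hxw hzw, ?_⟩
  intro k l hkl
  fin_cases k <;> fin_cases l <;>
    simp_all [Ggraph, FN, relOf, eq_comm, Ne.symm hxy, Ne.symm hxz, Ne.symm hyz,
      Ne.symm hxw, Ne.symm hyw, Ne.symm hzw]

/-- symmetric P4 x - y - z - w. -/
lemma hasFP4 {i : Υ} {x y z w : V} (hxy : x ≠ y) (hxz : x ≠ z) (hxw : x ≠ w)
    (hyz : y ≠ z) (hyw : y ≠ w) (hzw : z ≠ w)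
    (h1 : φ x y = i) (h2 : φ y x = i) (h3 : φ y z = i) (h4 : φ z y = i)
    (h5 : φ z w = i) (h6 : φ w z = i)
    (n1 : φ x z ≠ i) (n2 : φ z x ≠ i) (n3 : φ x w ≠ i) (n4 : φ w x ≠ i)
    (n5 : φ y w ≠ i) (n6 : φ w y ≠ i) :
    HasInducedCopy (Ggraph φ i) FP4 := by
  refine ⟨![x,y,z,w], inj4 hxy hxz hxw hyz hyw hzw, ?_⟩
  intro k l hkl
  fin_cases k <;> fin_cases l <;>
    simp_all [Ggraph, FP4, relOf, eq_comm, Ne.symm hxy, Ne.symm hxz, Ne.symm hyz,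
      Ne.symm hxw, Ne.symm hyw, Ne.symm hzw]

end Aux

/-! #### The eight forbidden patterns are prime digraphs -/

lemma prime_FD3 (M : Set (Fin 3)) (h : IsGraphModule FD3 M) :
    M = ∅ ∨ (∃ w, M = {w}) ∨ M = Set.univ := by
  by_cases h0 : (0:Fin 3) ∈ M <;> by_cases h1 : (1:Fin 3) ∈ M <;> by_cases h2 : (2:Fin 3) ∈ M
  · exact Or.inr (Or.inr (by ext w; simp only [Set.mem_univ, iff_true]; fin_cases w <;> assumption))
  · exact absurd (h 0 h0 1 h1 2 h2) (by simp [FD3, relOf])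
  · exact absurd (h 0 h0 2 h2 1 h1) (by simp [FD3, relOf])
  · refine Or.inr (Or.inl ⟨0, ?_⟩); ext w; fin_cases w <;> simp_all
  · exact absurd (h 1 h1 2 h2 0 h0) (by simp [FD3, relOf])
  · refine Or.inr (Or.inl ⟨1, ?_⟩); ext w; fin_cases w <;> simp_all
  · refine Or.inr (Or.inl ⟨2, ?_⟩); ext w; fin_cases w <;> simp_all
  · exact Or.inl (by ext w; fin_cases w <;> simp_all)

lemma prime_FA (M : Set (Fin 3)) (h : IsGraphModule FA M) :
    M = ∅ ∨ (∃ w, M = {w}) ∨ M = Set.univ := by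
  by_cases h0 : (0:Fin 3) ∈ M <;> by_cases h1 : (1:Fin 3) ∈ M <;> by_cases h2 : (2:Fin 3) ∈ M
  · exact Or.inr (Or.inr (by ext w; simp only [Set.mem_univ, iff_true]; fin_cases w <;> assumption))
  · exact absurd (h 0 h0 1 h1 2 h2) (by simp [FA, relOf])
  · exact absurd (h 0 h0 2 h2 1 h1) (by simp [FA, relOf])
  · refine Or.inr (Or.inl ⟨0, ?_⟩); ext w; fin_cases w <;> simp_all
  · exact absurd (h 1 h1 2 h2 0 h0) (by simp [FA, relOf])
  · refine Or.inr (Or.inl ⟨1, ?_⟩); ext w; fin_cases w <;> simp_all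
  · refine Or.inr (Or.inl ⟨2, ?_⟩); ext w; fin_cases w <;> simp_all
  · exact Or.inl (by ext w; fin_cases w <;> simp_all)

lemma prime_FB (M : Set (Fin 3)) (h : IsGraphModule FB M) :
    M = ∅ ∨ (∃ w, M = {w}) ∨ M = Set.univ := by
  by_cases h0 : (0:Fin 3) ∈ M <;> by_cases h1 : (1:Fin 3) ∈ M <;> by_cases h2 : (2:Fin 3) ∈ M
  · exact Or.inr (Or.inr (by ext w; simp only [Set.mem_univ, iff_true]; fin_cases w <;> assumption))
  · exact absurd (h 0 h0 1 h1 2 h2) (by simp [FB, relOf])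
  · exact absurd (h 0 h0 2 h2 1 h1) (by simp [FB, relOf])
  · refine Or.inr (Or.inl ⟨0, ?_⟩); ext w; fin_cases w <;> simp_all
  · exact absurd (h 1 h1 2 h2 0 h0) (by simp [FB, relOf])
  · refine Or.inr (Or.inl ⟨1, ?_⟩); ext w; fin_cases w <;> simp_all
  · refine Or.inr (Or.inl ⟨2, ?_⟩); ext w; fin_cases w <;> simp_all
  · exact Or.inl (by ext w; fin_cases w <;> simp_all)

lemma prime_FD3c (M : Set (Fin 3)) (h : IsGraphModule FD3c M) :
    M = ∅ ∨ (∃ w, M = {w}) ∨ M = Set.univ := by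
  by_cases h0 : (0:Fin 3) ∈ M <;> by_cases h1 : (1:Fin 3) ∈ M <;> by_cases h2 : (2:Fin 3) ∈ M
  · exact Or.inr (Or.inr (by ext w; simp only [Set.mem_univ, iff_true]; fin_cases w <;> assumption))
  · exact absurd (h 0 h0 1 h1 2 h2) (by simp [FD3c, relOf])
  · exact absurd (h 0 h0 2 h2 1 h1) (by simp [FD3c, relOf])
  · refine Or.inr (Or.inl ⟨0, ?_⟩); ext w; fin_cases w <;> simp_all
  · exact absurd (h 1 h1 2 h2 0 h0) (by simp [FD3c, relOf])
  · refine Or.inr (Or.inl ⟨1, ?_⟩); ext w; fin_cases w <;> simp_all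
  · refine Or.inr (Or.inl ⟨2, ?_⟩); ext w; fin_cases w <;> simp_all
  · exact Or.inl (by ext w; fin_cases w <;> simp_all)

lemma prime_FC3 (M : Set (Fin 3)) (h : IsGraphModule FC3 M) :
    M = ∅ ∨ (∃ w, M = {w}) ∨ M = Set.univ := by
  by_cases h0 : (0:Fin 3) ∈ M <;> by_cases h1 : (1:Fin 3) ∈ M <;> by_cases h2 : (2:Fin 3) ∈ M
  · exact Or.inr (Or.inr (by ext w; simp only [Set.mem_univ, iff_true]; fin_cases w <;> assumption))
  · exact absurd (h 0 h0 1 h1 2 h2) (by simp [FC3, relOf])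
  · exact absurd (h 0 h0 2 h2 1 h1) (by simp [FC3, relOf])
  · refine Or.inr (Or.inl ⟨0, ?_⟩); ext w; fin_cases w <;> simp_all
  · exact absurd (h 1 h1 2 h2 0 h0) (by simp [FC3, relOf])
  · refine Or.inr (Or.inl ⟨1, ?_⟩); ext w; fin_cases w <;> simp_all
  · refine Or.inr (Or.inl ⟨2, ?_⟩); ext w; fin_cases w <;> simp_all
  · exact Or.inl (by ext w; fin_cases w <;> simp_all)

lemma prime_FN (M : Set (Fin 4)) (h : IsGraphModule FN M) :
    M = ∅ ∨ (∃ w, M = {w}) ∨ M = Set.univ := by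
  by_cases h0 : (0:Fin 4) ∈ M <;> by_cases h1 : (1:Fin 4) ∈ M <;> by_cases h2 : (2:Fin 4) ∈ M <;> by_cases h3 : (3:Fin 4) ∈ M
  · exact Or.inr (Or.inr (by ext w; simp only [Set.mem_univ, iff_true]; fin_cases w <;> assumption))
  · exact absurd (h 0 h0 2 h2 3 h3) (by simp [FN, relOf])
  · exact absurd (h 0 h0 1 h1 2 h2) (by simp [FN, relOf])
  · exact absurd (h 0 h0 1 h1 2 h2) (by simp [FN, relOf])
  · exact absurd (h 0 h0 3 h3 1 h1) (by simp [FN, relOf])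
  · exact absurd (h 0 h0 2 h2 3 h3) (by simp [FN, relOf])
  · exact absurd (h 0 h0 3 h3 1 h1) (by simp [FN, relOf])
  · refine Or.inr (Or.inl ⟨0, ?_⟩); ext w; fin_cases w <;> simp_all
  · exact absurd (h 1 h1 2 h2 0 h0) (by simp [FN, relOf])
  · exact absurd (h 1 h1 2 h2 0 h0) (by simp [FN, relOf])
  · exact absurd (h 1 h1 3 h3 0 h0) (by simp [FN, relOf])
  · refine Or.inr (Or.inl ⟨1, ?_⟩); ext w; fin_cases w <;> simp_all
  · exact absurd (h 2 h2 3 h3 1 h1) (by simp [FN, relOf])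
  · refine Or.inr (Or.inl ⟨2, ?_⟩); ext w; fin_cases w <;> simp_all
  · refine Or.inr (Or.inl ⟨3, ?_⟩); ext w; fin_cases w <;> simp_all
  · exact Or.inl (by ext w; fin_cases w <;> simp_all)

lemma prime_FNc (M : Set (Fin 4)) (h : IsGraphModule FNc M) :
    M = ∅ ∨ (∃ w, M = {w}) ∨ M = Set.univ := by
  by_cases h0 : (0:Fin 4) ∈ M <;> by_cases h1 : (1:Fin 4) ∈ M <;> by_cases h2 : (2:Fin 4) ∈ M <;> by_cases h3 : (3:Fin 4) ∈ M
  · exact Or.inr (Or.inr (by ext w; simp only [Set.mem_univ, iff_true]; fin_cases w <;> assumption))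
  · exact absurd (h 0 h0 2 h2 3 h3) (by simp [FNc, relOf])
  · exact absurd (h 0 h0 1 h1 2 h2) (by simp [FNc, relOf])
  · exact absurd (h 0 h0 1 h1 2 h2) (by simp [FNc, relOf])
  · exact absurd (h 0 h0 3 h3 1 h1) (by simp [FNc, relOf])
  · exact absurd (h 0 h0 2 h2 3 h3) (by simp [FNc, relOf])
  · exact absurd (h 0 h0 3 h3 1 h1) (by simp [FNc, relOf])
  · refine Or.inr (Or.inl ⟨0, ?_⟩); ext w; fin_cases w <;> simp_all
  · exact absurd (h 1 h1 2 h2 0 h0) (by simp [FNc, relOf])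
  · exact absurd (h 1 h1 2 h2 0 h0) (by simp [FNc, relOf])
  · exact absurd (h 1 h1 3 h3 0 h0) (by simp [FNc, relOf])
  · refine Or.inr (Or.inl ⟨1, ?_⟩); ext w; fin_cases w <;> simp_all
  · exact absurd (h 2 h2 3 h3 1 h1) (by simp [FNc, relOf])
  · refine Or.inr (Or.inl ⟨2, ?_⟩); ext w; fin_cases w <;> simp_all
  · refine Or.inr (Or.inl ⟨3, ?_⟩); ext w; fin_cases w <;> simp_all
  · exact Or.inl (by ext w; fin_cases w <;> simp_all)

lemma prime_FP4 (M : Set (Fin 4)) (h : IsGraphModule FP4 M) :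
    M = ∅ ∨ (∃ w, M = {w}) ∨ M = Set.univ := by
  by_cases h0 : (0:Fin 4) ∈ M <;> by_cases h1 : (1:Fin 4) ∈ M <;> by_cases h2 : (2:Fin 4) ∈ M <;> by_cases h3 : (3:Fin 4) ∈ M
  · exact Or.inr (Or.inr (by ext w; simp only [Set.mem_univ, iff_true]; fin_cases w <;> assumption))
  · exact absurd (h 0 h0 2 h2 3 h3) (by simp [FP4, relOf])
  · exact absurd (h 0 h0 1 h1 2 h2) (by simp [FP4, relOf])
  · exact absurd (h 0 h0 1 h1 2 h2) (by simp [FP4, relOf])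
  · exact absurd (h 0 h0 3 h3 1 h1) (by simp [FP4, relOf])
  · exact absurd (h 0 h0 2 h2 3 h3) (by simp [FP4, relOf])
  · exact absurd (h 0 h0 3 h3 1 h1) (by simp [FP4, relOf])
  · refine Or.inr (Or.inl ⟨0, ?_⟩); ext w; fin_cases w <;> simp_all
  · exact absurd (h 1 h1 2 h2 0 h0) (by simp [FP4, relOf])
  · exact absurd (h 1 h1 2 h2 0 h0) (by simp [FP4, relOf])
  · exact absurd (h 1 h1 3 h3 0 h0) (by simp [FP4, relOf])
  · refine Or.inr (Or.inl ⟨1, ?_⟩); ext w; fin_cases w <;> simp_all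
  · exact absurd (h 2 h2 3 h3 1 h1) (by simp [FP4, relOf])
  · refine Or.inr (Or.inl ⟨2, ?_⟩); ext w; fin_cases w <;> simp_all
  · refine Or.inr (Or.inl ⟨3, ?_⟩); ext w; fin_cases w <;> simp_all
  · exact Or.inl (by ext w; fin_cases w <;> simp_all)

/-! #### Necessity: uniformly non-prime implies symbolic ultrametric -/

section Necessity

variable {V Υ : Type*} {φ : V → V → Υ}

lemma copy_not_unp {i : Υ} {n : ℕ} {K : Fin n → Fin n → Prop}
    (hK : ∀ M : Set (Fin n), IsGraphModule K M → M = ∅ ∨ (∃ w, M = {w}) ∨ M = Set.univ)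
    (hn : 3 ≤ n) (hcopy : HasInducedCopy (Ggraph φ i) K) (h : Unp φ) : False := by
  obtain ⟨ι, hinj, hiff⟩ := hcopy
  have hcard : (Set.range ι).ncard = n := by
    rw [← Set.image_univ, Set.ncard_image_of_injective _ hinj, Set.ncard_univ,
      Nat.card_eq_fintype_card, Fintype.card_fin]
  apply h (Set.range ι) (by omega)
  intro M hM
  have hMsub : M ⊆ Set.range ι := hM.1
  have himg : ι '' (ι ⁻¹' M) = M := Set.image_preimage_eq_of_subset hMsub
  have hGM : IsGraphModule K (ι ⁻¹' M) := by
    intro k hk l hl m hm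
    have hkm : k ≠ m := fun e => hm (e ▸ hk)
    have hlm : l ≠ m := fun e => hm (e ▸ hl)
    have h1 := hM.2 (ι k) hk (ι l) hl (ι m) ⟨⟨m, rfl⟩, hm⟩
    have hne1 : ι k ≠ ι m := fun e => hkm (hinj e)
    have hne2 : ι l ≠ ι m := fun e => hlm (hinj e)
    have hne1' : ι m ≠ ι k := Ne.symm hne1
    have hne2' : ι m ≠ ι l := Ne.symm hne2
    constructor
    · rw [← hiff k m hkm, ← hiff l m hlm]
      simp [Ggraph, hne1, hne2, h1.1]
    · rw [← hiff m k (Ne.symm hkm), ← hiff m l (Ne.symm hlm)]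
      simp [Ggraph, hne1', hne2', h1.2]
  rcases hK (ι ⁻¹' M) hGM with h' | ⟨w, h'⟩ | h'
  · left; rw [← himg, h']; simp
  · right; left; exact ⟨ι w, by rw [← himg, h']; simp⟩
  · right; right; rw [← himg, h', Set.image_univ]

lemma unp_condU1 (h : Unp φ) : CondU1 φ := by
  intro i
  exact ⟨fun hc => copy_not_unp prime_FD3 (by norm_num) hc h,
    fun hc => copy_not_unp prime_FA (by norm_num) hc h,
    fun hc => copy_not_unp prime_FB (by norm_num) hc h,
    fun hc => copy_not_unp prime_FD3c (by norm_num) hc h,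
    fun hc => copy_not_unp prime_FC3 (by norm_num) hc h,
    fun hc => copy_not_unp prime_FNc (by norm_num) hc h,
    fun hc => copy_not_unp prime_FN (by norm_num) hc h,
    fun hc => copy_not_unp prime_FP4 (by norm_num) hc h⟩

lemma ncard3_le2 {A : Type*} {a b c : A} (h : a = b ∨ a = c ∨ b = c) :
    ({a,b,c} : Set A).ncard ≤ 2 := by
  rcases h with h | h | h
  · subst h
    calc ({a,a,c} : Set A).ncard ≤ ({a,c} : Set A).ncard := by
          apply Set.ncard_le_ncard _ (Set.toFinite _)
          intro w hw; simp at hw ⊢; tauto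
      _ ≤ ({c} : Set A).ncard + 1 := Set.ncard_insert_le _ _
      _ ≤ 2 := by rw [Set.ncard_singleton]
  · subst h
    calc ({a,b,a} : Set A).ncard ≤ ({a,b} : Set A).ncard := by
          apply Set.ncard_le_ncard _ (Set.toFinite _)
          intro w hw; simp at hw ⊢; tauto
      _ ≤ ({b} : Set A).ncard + 1 := Set.ncard_insert_le _ _
      _ ≤ 2 := by rw [Set.ncard_singleton]
  · subst h
    calc ({a,b,b} : Set A).ncard ≤ ({a,b} : Set A).ncard := by
          apply Set.ncard_le_ncard _ (Set.toFinite _)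
          intro w hw; simp at hw ⊢; tauto
      _ ≤ ({b} : Set A).ncard + 1 := Set.ncard_insert_le _ _
      _ ≤ 2 := by rw [Set.ncard_singleton]

lemma unp_condU2 (h : Unp φ) : CondU2 φ := by
  intro x y z hxy hxz hyz
  by_contra hcon
  have hd : ¬ (Dset φ x y = Dset φ x z ∨ Dset φ x y = Dset φ y z ∨
      Dset φ x z = Dset φ y z) := fun hor => hcon (ncard3_le2 hor)
  push_neg at hd
  obtain ⟨hd1, hd2, hd3⟩ := hd
  have hX : ({x,y,z} : Set V).ncard = 3 :=
    Set.ncard_eq_three.mpr ⟨x, y, z, hxy, hxz, hyz, rfl⟩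
  apply h {x,y,z} (le_of_eq hX.symm)
  intro M hM
  have hsub : M ⊆ {x,y,z} := hM.1
  by_cases hx : x ∈ M <;> by_cases hy : y ∈ M <;> by_cases hz : z ∈ M
  · right; right
    apply Set.Subset.antisymm hsub
    intro w hw
    rcases hw with h' | h' | h' <;> (subst h'; assumption)
  · exfalso
    have e := hM.2 x hx y hy z ⟨by simp, hz⟩
    exact hd3 (by unfold Dset; rw [e.1, e.2])
  · exfalso
    have e := hM.2 x hx z hz y ⟨by simp, hy⟩
    apply hd2
    unfold Dset
    rw [e.1, e.2, Set.pair_comm]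
  · right; left
    refine ⟨x, Set.Subset.antisymm ?_ (by simp [hx])⟩
    intro w hw
    rcases hsub hw with h' | h' | h' <;> subst h' <;> simp_all
  · exfalso
    have e := hM.2 y hy z hz x ⟨by simp, hx⟩
    exact hd1 (by unfold Dset; rw [e.1, e.2])
  · right; left
    refine ⟨y, Set.Subset.antisymm ?_ (by simp [hy])⟩
    intro w hw
    rcases hsub hw with h' | h' | h' <;> subst h' <;> simp_all
  · right; left
    refine ⟨z, Set.Subset.antisymm ?_ (by simp [hz])⟩
    intro w hw
    rcases hsub hw with h' | h' | h' <;> subst h' <;> simp_all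
  · left
    rw [Set.eq_empty_iff_forall_notMem]
    intro w hw
    rcases hsub hw with h' | h' | h' <;> subst h' <;> simp_all

end Necessity

/-! #### Sufficiency machinery -/

section Suff

variable {V Υ : Type*} {φ : V → V → Υ}

/-- The unordered "(α,β)-pair" predicate on an ordered pair of vertices. -/
def Ppair (φ : V → V → Υ) (α β : Υ) (u w : V) : Prop :=
  (φ u w = α ∧ φ w u = β) ∨ (φ u w = β ∧ φ w u = α)

lemma ppair_symm {α β : Υ} {u w : V} (h : Ppair φ α β u w) : Ppair φ α β w u := by
  rcases h with ⟨h1, h2⟩ | ⟨h1, h2⟩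
  · exact Or.inr ⟨h2, h1⟩
  · exact Or.inl ⟨h2, h1⟩

lemma ppair_swap {α β : Υ} {u w : V} (h : Ppair φ α β u w) : Ppair φ β α u w :=
  h.symm

/-- One step of the "non-(α,β)" graph inside `X`. -/
def stepRel (φ : V → V → Υ) (α β : Υ) (X : Set V) (u w : V) : Prop :=
  u ∈ X ∧ w ∈ X ∧ u ≠ w ∧ ¬ Ppair φ α β u w

lemma stepRel_symm {α β : Υ} {X : Set V} : Symmetric (stepRel φ α β X) := by
  intro u w h
  exact ⟨h.2.1, h.1, Ne.symm h.2.2.1, fun hp => h.2.2.2 (ppair_symm hp)⟩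

lemma rtg_symm {α β : Υ} {X : Set V} {u w : V}
    (h : Relation.ReflTransGen (stepRel φ α β X) u w) :
    Relation.ReflTransGen (stepRel φ α β X) w u :=
  (@Relation.ReflTransGen.stdSymm _ _ ⟨stepRel_symm⟩).symm _ _ h

/-- Orientation coherence, base contradiction. -/
lemma OL0 (hU1 : CondU1 φ) {α β : Υ} (hab : α ≠ β) {u u' w : V}
    (huu' : u ≠ u') (huw : u ≠ w) (hu'w : u' ≠ w)
    (hP : ¬ Ppair φ α β u u')
    (e1 : φ u w = α) (e2 : φ w u = β) (e3 : φ u' w = β) (e4 : φ w u' = α) : False := by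
  have hba : β ≠ α := Ne.symm hab
  by_cases hp : φ u u' = α <;> by_cases hq : φ u' u = α
  · -- both α : FD3c in G_α
    exact (hU1 α).2.2.2.1 (hasFD3c huu' huw hu'w e1 hp hq e4
      (by rw [e2]; exact hba) (by rw [e3]; exact hba))
  · -- p = α, q ≠ α : q ≠ β as well, D3 in G_β : u' → w → u
    have hq2 : φ u' u ≠ β := fun e => hP (Or.inl ⟨hp, e⟩)
    exact (hU1 β).1 (hasFD3 hu'w (Ne.symm huu') (Ne.symm huw) e3 e2
      (by rw [e4]; exact hab) (by rw [e1]; exact hab) hq2 (by rw [hp]; exact hab))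
  · -- p ≠ α, q = α : C3 in G_α : u → w → u' → u
    exact (hU1 α).2.2.2.2.1 (hasFC3 huw huu' (Ne.symm hu'w) e1 e4 hq
      (by rw [e2]; exact hba) (by rw [e3]; exact hba) hp)
  · -- p ≠ α, q ≠ α : D3 in G_α : u → w → u'
    exact (hU1 α).1 (hasFD3 huw huu' (Ne.symm hu'w) e1 e4
      (by rw [e2]; exact hba) (by rw [e3]; exact hba) hp hq)

lemma OLedge (hU1 : CondU1 φ) {α β : Υ} (hab : α ≠ β) {u u' w : V}
    (huu' : u ≠ u') (hP : ¬ Ppair φ α β u u')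
    (hPu : Ppair φ α β u w) (hPu' : Ppair φ α β u' w)
    (huw : u ≠ w) (hu'w : u' ≠ w) :
    φ u w = φ u' w ∧ φ w u = φ w u' := by
  rcases hPu with ⟨a1, a2⟩ | ⟨a1, a2⟩ <;> rcases hPu' with ⟨b1, b2⟩ | ⟨b1, b2⟩
  · rw [a1, a2, b1, b2]; exact ⟨rfl, rfl⟩
  · exact absurd (OL0 hU1 hab huu' huw hu'w hP a1 a2 b1 b2) not_false
  · exact absurd (OL0 hU1 hab (Ne.symm huu') hu'w huw
      (fun hp => hP (ppair_symm hp)) b1 b2 a1 a2) not_false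
  · rw [a1, a2, b1, b2]; exact ⟨rfl, rfl⟩

/-- Orientation coherence along a connectivity chain. -/
lemma chainP (hU1 : CondU1 φ) {α β : Υ} (hab : α ≠ β) {X : Set V} {m u w : V}
    (hw : w ∈ X)
    (h : Relation.ReflTransGen (stepRel φ α β X) m u)
    (hmw : ¬ Relation.ReflTransGen (stepRel φ α β X) m w) :
    φ m w = φ u w ∧ φ w m = φ w u := by
  induction h with
  | refl => exact ⟨rfl, rfl⟩
  | @tail b c hmb hbc ih =>
    have hbw : b ≠ w := fun e => hmw (e ▸ hmb)
    have hcw : c ≠ w := fun e => hmw (e ▸ hmb.tail hbc)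
    have hPb : Ppair φ α β b w := by
      by_contra hcon
      exact hmw (hmb.tail ⟨hbc.1, hw, hbw, hcon⟩)
    have hPc : Ppair φ α β c w := by
      by_contra hcon
      exact hmw ((hmb.tail hbc).tail ⟨hbc.2.1, hw, hcw, hcon⟩)
    have hol := OLedge hU1 hab hbc.2.2.1 hbc.2.2.2 hPb hPc hbw hcw
    exact ⟨ih.1.trans hol.1, ih.2.trans hol.2⟩

/-- Every finite nonempty set with a total transitive relation has a bottom. -/
lemma exists_bot {A : Type*} (R : A → A → Prop) :
    ∀ S : Finset A, S.Nonempty →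
      (∀ a ∈ S, ∀ b ∈ S, R a b ∨ R b a) →
      (∀ a ∈ S, ∀ b ∈ S, ∀ c ∈ S, R a b → R b c → R a c) →
      ∃ m ∈ S, ∀ w ∈ S, R m w := by
  intro S
  classical
  induction S using Finset.induction_on with
  | empty => intro h; simp at h
  | @insert a s ha ih =>
    intro _ htot htr
    by_cases hs : s.Nonempty
    · obtain ⟨m, hm, hmin⟩ := ih hs
        (fun x hx y hy => htot x (Finset.mem_insert_of_mem hx) y (Finset.mem_insert_of_mem hy))
        (fun x hx y hy z hz => htr x (Finset.mem_insert_of_mem hx) y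
          (Finset.mem_insert_of_mem hy) z (Finset.mem_insert_of_mem hz))
      have hmS : m ∈ insert a s := Finset.mem_insert_of_mem hm
      have haS : a ∈ insert a s := Finset.mem_insert_self a s
      rcases htot m hmS a haS with h1 | h1
      · refine ⟨m, hmS, fun w hw => ?_⟩
        rcases Finset.mem_insert.mp hw with e | e
        · exact e ▸ h1
        · exact hmin w e
      · refine ⟨a, haS, fun w hw => ?_⟩
        rcases Finset.mem_insert.mp hw with e | e
        · subst e
          rcases htot w haS w haS with h' | h' <;> exact h'
        · exact htr a haS m hmS w (Finset.mem_insert_of_mem e) h1 (hmin w e)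
    · refine ⟨a, Finset.mem_insert_self a s, fun w hw => ?_⟩
      rcases Finset.mem_insert.mp hw with e | e
      · subst e
        rcases htot w (Finset.mem_insert_self w s) w (Finset.mem_insert_self w s) with h' | h' <;>
          exact h'
      · exact absurd ⟨w, e⟩ hs

/-- A monochromatic directed triangle with distinct reverse color is forbidden. -/
lemma triC3 (hU1 : CondU1 φ) {α β : Υ} (hab : α ≠ β) {u w z : V}
    (huw : u ≠ w) (huz : u ≠ z) (hwz : w ≠ z)
    (e1 : φ u w = α) (e2 : φ w u = β) (e3 : φ w z = α) (e4 : φ z w = β)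
    (e5 : φ z u = α) (e6 : φ u z = β) : False := by
  have hba : β ≠ α := Ne.symm hab
  exact (hU1 α).2.2.2.2.1 (hasFC3 huw huz hwz e1 e3 e5
    (by rw [e2]; exact hba) (by rw [e4]; exact hba) (by rw [e6]; exact hba))

/-- Forced labels across the `v`-cut in the linear case. -/
lemma forcedLabel (hU1 : CondU1 φ) {γ δ : Υ} (hgd : γ ≠ δ) {u w v : V}
    (huw : u ≠ w) (huv : u ≠ v) (hwv : w ≠ v)
    (e1 : φ u v = γ) (e2 : φ v u = δ) (e3 : φ w v = δ) (e4 : φ v w = γ) :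
    φ u w = γ ∧ φ w u = δ := by
  have hdg : δ ≠ γ := Ne.symm hgd
  by_cases hq : φ w u = γ
  · exfalso
    by_cases hp : φ u w = γ
    · exact (hU1 γ).2.2.2.1 (hasFD3c huw huv hwv e1 hp hq e4
        (by rw [e2]; exact hdg) (by rw [e3]; exact hdg))
    · exact (hU1 γ).2.2.2.2.1 (hasFC3 huv huw (Ne.symm hwv) e1 e4 hq
        (by rw [e2]; exact hdg) (by rw [e3]; exact hdg) hp)
  · by_cases hp : φ u w = γ
    · by_cases hq2 : φ w u = δ
      · exact ⟨hp, hq2⟩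
      · exfalso
        exact (hU1 δ).1 (hasFD3 hwv (Ne.symm huw) (Ne.symm huv) e3 e2
          (by rw [e4]; exact hgd) (by rw [e1]; exact hgd) hq2 (by rw [hp]; exact hgd))
    · exfalso
      exact (hU1 γ).1 (hasFD3 huv huw (Ne.symm hwv) e1 e4
        (by rw [e2]; exact hdg) (by rw [e3]; exact hdg) hp hq)

end Suff

section SuffB

variable {V Υ : Type*} {φ : V → V → Υ}

/-- Böcker–Dress style forbidden quartet: an induced "path of σ-pairs"
`x1-x2-x3-x4` whose chords avoid a color `s` of σ is impossible. -/
lemma Qpath (hU1 : CondU1 φ) {s : Υ} {x1 x2 x3 x4 : V}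
    (d12 : x1 ≠ x2) (d13 : x1 ≠ x3) (d14 : x1 ≠ x4)
    (d23 : x2 ≠ x3) (d24 : x2 ≠ x4) (d34 : x3 ≠ x4)
    (e12 : (φ x2 x3 = φ x1 x2 ∧ φ x3 x2 = φ x2 x1) ∨
           (φ x2 x3 = φ x2 x1 ∧ φ x3 x2 = φ x1 x2))
    (e13 : (φ x3 x4 = φ x1 x2 ∧ φ x4 x3 = φ x2 x1) ∨
           (φ x3 x4 = φ x2 x1 ∧ φ x4 x3 = φ x1 x2))
    (hs : φ x1 x2 = s ∨ φ x2 x1 = s)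
    (np1 : φ x1 x3 ≠ s) (np2 : φ x3 x1 ≠ s) (np3 : φ x1 x4 ≠ s) (np4 : φ x4 x1 ≠ s)
    (np5 : φ x2 x4 ≠ s) (np6 : φ x4 x2 ≠ s) : False := by
  by_cases hsing : φ x1 x2 = φ x2 x1
  · have h12 : φ x1 x2 = s := by
      rcases hs with h | h
      · exact h
      · exact hsing.trans h
    have h21 : φ x2 x1 = s := hsing.symm.trans h12
    have h23 : φ x2 x3 = s := by rcases e12 with ⟨a, _⟩ | ⟨a, _⟩; exacts [a.trans h12, a.trans h21]
    have h32 : φ x3 x2 = s := by rcases e12 with ⟨_, b⟩ | ⟨_, b⟩; exacts [b.trans h21, b.trans h12]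
    have h34 : φ x3 x4 = s := by rcases e13 with ⟨a, _⟩ | ⟨a, _⟩; exacts [a.trans h12, a.trans h21]
    have h43 : φ x4 x3 = s := by rcases e13 with ⟨_, b⟩ | ⟨_, b⟩; exacts [b.trans h21, b.trans h12]
    exact (hU1 s).2.2.2.2.2.2.2 (hasFP4 d12 d13 d14 d23 d24 d34
      h12 h21 h23 h32 h34 h43 np1 np2 np3 np4 np5 np6)
  · have E1 : (φ x1 x2 = s ∧ φ x2 x1 ≠ s) ∨ (φ x2 x1 = s ∧ φ x1 x2 ≠ s) := by
      rcases hs with h | h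
      · exact Or.inl ⟨h, fun e => hsing (h.trans e.symm)⟩
      · exact Or.inr ⟨h, fun e => hsing (e.trans h.symm)⟩
    have E2 : (φ x2 x3 = s ∧ φ x3 x2 ≠ s) ∨ (φ x3 x2 = s ∧ φ x2 x3 ≠ s) := by
      rcases e12 with ⟨a, b⟩ | ⟨a, b⟩ <;> rcases E1 with ⟨c, d⟩ | ⟨c, d⟩
      · exact Or.inl ⟨a.trans c, fun e => d (b.symm.trans e)⟩
      · exact Or.inr ⟨b.trans c, fun e => d (a.symm.trans e)⟩
      · exact Or.inr ⟨b.trans c, fun e => d (a.symm.trans e)⟩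
      · exact Or.inl ⟨a.trans c, fun e => d (b.symm.trans e)⟩
    have E3 : (φ x3 x4 = s ∧ φ x4 x3 ≠ s) ∨ (φ x4 x3 = s ∧ φ x3 x4 ≠ s) := by
      rcases e13 with ⟨a, b⟩ | ⟨a, b⟩ <;> rcases E1 with ⟨c, d⟩ | ⟨c, d⟩
      · exact Or.inl ⟨a.trans c, fun e => d (b.symm.trans e)⟩
      · exact Or.inr ⟨b.trans c, fun e => d (a.symm.trans e)⟩
      · exact Or.inr ⟨b.trans c, fun e => d (a.symm.trans e)⟩
      · exact Or.inl ⟨a.trans c, fun e => d (b.symm.trans e)⟩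
    rcases E1 with ⟨o1, no1⟩ | ⟨o1, no1⟩ <;> rcases E2 with ⟨o2, no2⟩ | ⟨o2, no2⟩ <;>
      rcases E3 with ⟨o3, no3⟩ | ⟨o3, no3⟩
    · exact (hU1 s).1 (hasFD3 d12 d13 d23 o1 o2 no1 no2 np1 np2)
    · exact (hU1 s).1 (hasFD3 d12 d13 d23 o1 o2 no1 no2 np1 np2)
    · exact (hU1 s).2.2.2.2.2.2.1 (hasFN d34 (Ne.symm d23) (Ne.symm d13) (Ne.symm d24)
        (Ne.symm d14) (Ne.symm d12) o3 o2 o1 no3 no2 no1 np6 np5 np4 np3 np2 np1)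
    · exact (hU1 s).1 (hasFD3 (Ne.symm d34) (Ne.symm d24) (Ne.symm d23) o3 o2 no3 no2 np6 np5)
    · exact (hU1 s).1 (hasFD3 d23 d24 d34 o2 o3 no2 no3 np5 np6)
    · exact (hU1 s).2.2.2.2.2.2.1 (hasFN (Ne.symm d12) d23 d24 d13 d14 d34
        o1 o2 o3 no1 no2 no3 np1 np2 np3 np4 np5 np6)
    · exact (hU1 s).1 (hasFD3 (Ne.symm d23) (Ne.symm d13) (Ne.symm d12) o2 o1 no2 no1 np2 np1)
    · exact (hU1 s).1 (hasFD3 (Ne.symm d23) (Ne.symm d13) (Ne.symm d12) o2 o1 no2 no1 np2 np1)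

/-- Full forbidden quartet lemma: `p,q` on one side, `z` on the other side of
an `(α,β)`-split, `v` attached to `q` and `z` by a common non-`(α,β)` pair. -/
lemma Qfull (hU1 : CondU1 φ) {α β : Υ} {p q v z : V}
    (dpq : p ≠ q) (dpv : p ≠ v) (dpz : p ≠ z) (dqv : q ≠ v) (dqz : q ≠ z) (dvz : v ≠ z)
    (hpz1 : φ p z = α) (hpz2 : φ z p = β) (hqz1 : φ q z = α) (hqz2 : φ z q = β)
    (hpv : Ppair φ α β p v)
    (hpq : (φ p q = φ q v ∧ φ q p = φ v q) ∨ (φ p q = φ v q ∧ φ q p = φ q v))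
    (hvz : (φ v z = φ q v ∧ φ z v = φ v q) ∨ (φ v z = φ v q ∧ φ z v = φ q v))
    (hqv : ¬ Ppair φ α β q v) : False := by
  have e12 : (φ q v = φ p q ∧ φ v q = φ q p) ∨ (φ q v = φ q p ∧ φ v q = φ p q) := by
    rcases hpq with ⟨a, b⟩ | ⟨a, b⟩
    · exact Or.inl ⟨a.symm, b.symm⟩
    · exact Or.inr ⟨b.symm, a.symm⟩
  have e13 : (φ v z = φ p q ∧ φ z v = φ q p) ∨ (φ v z = φ q p ∧ φ z v = φ p q) := by
    rcases hvz with ⟨c, d⟩ | ⟨c, d⟩ <;> rcases hpq with ⟨a, b⟩ | ⟨a, b⟩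
    · exact Or.inl ⟨c.trans a.symm, d.trans b.symm⟩
    · exact Or.inr ⟨c.trans b.symm, d.trans a.symm⟩
    · exact Or.inr ⟨c.trans b.symm, d.trans a.symm⟩
    · exact Or.inl ⟨c.trans a.symm, d.trans b.symm⟩
  by_cases hγ : φ q v = α ∨ φ q v = β
  · by_cases hδ : φ v q = α ∨ φ v q = β
    · -- both labels of the σ-pair lie in {α,β}: forces γ = δ and α ≠ β
      have hgd : φ q v = φ v q := by
        rcases hγ with h1 | h1 <;> rcases hδ with h2 | h2
        · exact h1.trans h2.symm
        · exact absurd (Or.inl ⟨h1, h2⟩) hqv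
        · exact absurd (Or.inr ⟨h1, h2⟩) hqv
        · exact h1.trans h2.symm
      have hab : α ≠ β := by
        intro e
        rcases hγ with h1 | h1
        · exact hqv (Or.inl ⟨h1, hgd.symm.trans (h1.trans e)⟩)
        · exact hqv (Or.inr ⟨h1, (hgd.symm.trans h1).trans e.symm⟩)
      have e12' : (φ p z = φ v p ∧ φ z p = φ p v) ∨ (φ p z = φ p v ∧ φ z p = φ v p) := by
        rcases hpv with ⟨h1, h2⟩ | ⟨h1, h2⟩
        · exact Or.inr ⟨hpz1.trans h1.symm, hpz2.trans h2.symm⟩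
        · exact Or.inl ⟨hpz1.trans h2.symm, hpz2.trans h1.symm⟩
      have e13' : (φ z q = φ v p ∧ φ q z = φ p v) ∨ (φ z q = φ p v ∧ φ q z = φ v p) := by
        rcases hpv with ⟨h1, h2⟩ | ⟨h1, h2⟩
        · exact Or.inl ⟨hqz2.trans h2.symm, hqz1.trans h1.symm⟩
        · exact Or.inr ⟨hqz2.trans h1.symm, hqz1.trans h2.symm⟩
      rcases hγ with hga | hga
      · -- γ = α, use s = β on the τ-path v-p-z-q
        have hvq' : φ v q = α := hgd.symm.trans hga
        have l1 : φ v z = α := by rcases hvz with ⟨c, _⟩ | ⟨c, _⟩; exacts [c.trans hga, c.trans hvq']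
        have l2 : φ z v = α := by rcases hvz with ⟨_, d⟩ | ⟨_, d⟩; exacts [d.trans hvq', d.trans hga]
        have l3 : φ p q = α := by rcases hpq with ⟨a, _⟩ | ⟨a, _⟩; exacts [a.trans hga, a.trans hvq']
        have l4 : φ q p = α := by rcases hpq with ⟨_, b⟩ | ⟨_, b⟩; exacts [b.trans hvq', b.trans hga]
        have hs' : φ v p = β ∨ φ p v = β := by
          rcases hpv with ⟨h1, h2⟩ | ⟨h1, h2⟩
          · exact Or.inl h2
          · exact Or.inr h1
        exact Qpath hU1 (Ne.symm dpv) dvz (Ne.symm dqv) dpz dpq (Ne.symm dqz) e12' e13' hs'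
          (by rw [l1]; exact hab) (by rw [l2]; exact hab) (by rw [hvq']; exact hab)
          (by rw [hga]; exact hab) (by rw [l3]; exact hab) (by rw [l4]; exact hab)
      · -- γ = β, use s = α on the τ-path v-p-z-q
        have hba : β ≠ α := Ne.symm hab
        have hvq' : φ v q = β := hgd.symm.trans hga
        have l1 : φ v z = β := by rcases hvz with ⟨c, _⟩ | ⟨c, _⟩; exacts [c.trans hga, c.trans hvq']
        have l2 : φ z v = β := by rcases hvz with ⟨_, d⟩ | ⟨_, d⟩; exacts [d.trans hvq', d.trans hga]
        have l3 : φ p q = β := by rcases hpq with ⟨a, _⟩ | ⟨a, _⟩; exacts [a.trans hga, a.trans hvq']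
        have l4 : φ q p = β := by rcases hpq with ⟨_, b⟩ | ⟨_, b⟩; exacts [b.trans hvq', b.trans hga]
        have hs' : φ v p = α ∨ φ p v = α := by
          rcases hpv with ⟨h1, h2⟩ | ⟨h1, h2⟩
          · exact Or.inr h1
          · exact Or.inl h2
        exact Qpath hU1 (Ne.symm dpv) dvz (Ne.symm dqv) dpz dpq (Ne.symm dqz) e12' e13' hs'
          (by rw [l1]; exact hba) (by rw [l2]; exact hba) (by rw [hvq']; exact hba)
          (by rw [hga]; exact hba) (by rw [l3]; exact hba) (by rw [l4]; exact hba)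
    · -- δ = φ v q ∉ {α, β}: use s = φ v q on the σ-path p-q-v-z
      push_neg at hδ
      have hs' : φ p q = φ v q ∨ φ q p = φ v q := by
        rcases hpq with ⟨a, b⟩ | ⟨a, b⟩
        · exact Or.inr b
        · exact Or.inl a
      refine Qpath hU1 dpq dpv dpz dqv dqz dvz e12 e13 hs' ?_ ?_ ?_ ?_ ?_ ?_
      · rcases hpv with ⟨h1, _⟩ | ⟨h1, _⟩
        · exact fun e => hδ.1 (e.symm.trans h1)
        · exact fun e => hδ.2 (e.symm.trans h1)
      · rcases hpv with ⟨_, h2⟩ | ⟨_, h2⟩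
        · exact fun e => hδ.2 (e.symm.trans h2)
        · exact fun e => hδ.1 (e.symm.trans h2)
      · exact fun e => hδ.1 (e.symm.trans hpz1)
      · exact fun e => hδ.2 (e.symm.trans hpz2)
      · exact fun e => hδ.1 (e.symm.trans hqz1)
      · exact fun e => hδ.2 (e.symm.trans hqz2)
  · -- γ = φ q v ∉ {α, β}: use s = φ q v on the σ-path p-q-v-z
    push_neg at hγ
    have hs' : φ p q = φ q v ∨ φ q p = φ q v := by
      rcases hpq with ⟨a, b⟩ | ⟨a, b⟩
      · exact Or.inl a
      · exact Or.inr b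
    refine Qpath hU1 dpq dpv dpz dqv dqz dvz e12 e13 hs' ?_ ?_ ?_ ?_ ?_ ?_
    · rcases hpv with ⟨h1, _⟩ | ⟨h1, _⟩
      · exact fun e => hγ.1 (e.symm.trans h1)
      · exact fun e => hγ.2 (e.symm.trans h1)
    · rcases hpv with ⟨_, h2⟩ | ⟨_, h2⟩
      · exact fun e => hγ.2 (e.symm.trans h2)
      · exact fun e => hγ.1 (e.symm.trans h2)
    · exact fun e => hγ.1 (e.symm.trans hpz1)
    · exact fun e => hγ.2 (e.symm.trans hpz2)
    · exact fun e => hγ.1 (e.symm.trans hqz1)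
    · exact fun e => hγ.2 (e.symm.trans hqz2)

end SuffB

section SuffC

variable {V Υ : Type*} {φ : V → V → Υ}

lemma dset_comm (u w : V) : Dset φ u w = Dset φ w u := Set.pair_comm _ _

lemma dset_to_ppair {α β : Υ} {u w : V} (h : Dset φ u w = {α, β}) : Ppair φ α β u w := by
  rcases Set.pair_eq_pair_iff.mp h with ⟨e1, e2⟩ | ⟨e1, e2⟩
  · exact Or.inl ⟨e1, e2⟩
  · exact Or.inr ⟨e1, e2⟩

lemma ppair_to_dset {α β : Υ} {u w : V} (h : Ppair φ α β u w) : Dset φ u w = {α, β} := by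
  rcases h with ⟨e1, e2⟩ | ⟨e1, e2⟩
  · unfold Dset; rw [e1, e2]
  · unfold Dset; rw [e1, e2]; exact Set.pair_comm _ _

lemma u2cases (hU2 : CondU2 φ) : ∀ x y z : V, x ≠ y → x ≠ z → y ≠ z →
    Dset φ x y = Dset φ x z ∨ Dset φ x y = Dset φ y z ∨ Dset φ x z = Dset φ y z := by
  intro x y z hxy hxz hyz
  by_contra hc
  push_neg at hc
  have h3 : ({Dset φ x y, Dset φ x z, Dset φ y z} : Set (Set Υ)).ncard = 3 :=
    Set.ncard_eq_three.mpr ⟨_, _, _, hc.1, hc.2.1, hc.2.2, rfl⟩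
  have := hU2 x y z hxy hxz hyz
  omega

/-- The key splitting lemma: a finite set of size ≥ 2 in a structure
satisfying (U1) and (U2) splits into two uniformly-labeled parts. -/
lemma split_of_SU (hU1 : CondU1 φ) (hU2 : CondU2 φ) :
    ∀ n : ℕ, ∀ X : Set V, X.Finite → X.ncard = n → 2 ≤ n →
      ∃ A B : Set V, ∃ α β : Υ, A.Nonempty ∧ B.Nonempty ∧ A ∩ B = ∅ ∧ A ∪ B = X ∧
        ∀ a ∈ A, ∀ b ∈ B, φ a b = α ∧ φ b a = β := by
  have hU2' := u2cases hU2
  intro n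
  induction n using Nat.strong_induction_on with
  | _ n IH =>
  intro X hfin hcard hn2
  rcases eq_or_lt_of_le hn2 with h2 | h3
  · -- base case n = 2
    obtain ⟨x, y, hxy, hX⟩ := Set.ncard_eq_two.mp (hcard.trans h2.symm)
    refine ⟨{x}, {y}, φ x y, φ y x, ⟨x, rfl⟩, ⟨y, rfl⟩, ?_, ?_, ?_⟩
    · ext w
      simp only [Set.mem_inter_iff, Set.mem_singleton_iff, Set.mem_empty_iff_false, iff_false,
        not_and]
      rintro rfl
      exact hxy
    · rw [hX]; exact Set.singleton_union
    · intro a ha b hb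
      rw [Set.mem_singleton_iff] at ha hb
      subst ha; subst hb; exact ⟨rfl, rfl⟩
  · -- inductive step, n ≥ 3
    obtain ⟨v, hv⟩ : X.Nonempty := Set.nonempty_of_ncard_ne_zero (by omega)
    have hfin' : (X \ {v}).Finite := hfin.diff
    have hcard' : (X \ {v}).ncard = n - 1 := by
      have := Set.ncard_diff_singleton_add_one hv hfin
      omega
    obtain ⟨A, B, α, β, hA, hB, hABdisj, hABX, hlab⟩ :=
      IH (n - 1) (by omega) (X \ {v}) hfin' hcard' (by omega)
    have hX'prop : ∀ u, u ∈ X \ {v} ↔ u ∈ X ∧ u ≠ v := by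
      intro u; simp [Set.mem_diff]
    have hvX' : v ∉ X \ {v} := by simp
    have hAX' : A ⊆ X \ {v} := hABX ▸ Set.subset_union_left
    have hBX' : B ⊆ X \ {v} := hABX ▸ Set.subset_union_right
    have hdisj : ∀ a ∈ A, ∀ b ∈ B, a ≠ b := by
      intro a ha b hb e
      have : a ∈ A ∩ B := ⟨ha, e ▸ hb⟩
      rw [hABdisj] at this
      exact this
    have hunionAB : ∀ u, u ∈ X \ {v} → u ∈ A ∨ u ∈ B := by
      intro u hu
      have : u ∈ A ∪ B := hABX ▸ hu
      exact this
    by_cases hconn : ∀ x ∈ X, ∀ y ∈ X, Relation.ReflTransGen (stepRel φ α β X) x y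
    · -- CASE 2 : the non-(α,β) graph on X is connected
      have hext : ∀ w ∈ X, w ≠ v → ∃ s0, (s0 ∈ X ∧ s0 ≠ v ∧ ¬ Ppair φ α β s0 v) ∧
          Relation.ReflTransGen (stepRel φ α β (X \ {v})) s0 w := by
        intro w hw hwv
        have hpath := hconn v hv w hw
        have key : ∀ w', Relation.ReflTransGen (stepRel φ α β X) v w' →
            w' = v ∨ ((w' ∈ X ∧ w' ≠ v) ∧ ∃ s0, (s0 ∈ X ∧ s0 ≠ v ∧ ¬ Ppair φ α β s0 v) ∧
              Relation.ReflTransGen (stepRel φ α β (X \ {v})) s0 w') := by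
          intro w' hp
          induction hp with
          | refl => exact Or.inl rfl
          | @tail b c hb hbc ih =>
            by_cases hcv : c = v
            · exact Or.inl hcv
            · right
              have hcX : c ∈ X := hbc.2.1
              refine ⟨⟨hcX, hcv⟩, ?_⟩
              rcases ih with e | ⟨⟨hbX, hbv⟩, s0, hs0, hs0b⟩
              · refine ⟨c, ⟨hcX, hcv, fun hP => ?_⟩, Relation.ReflTransGen.refl⟩
                exact (e ▸ hbc).2.2.2 (ppair_symm hP)
              · refine ⟨s0, hs0, hs0b.tail ?_⟩
                exact ⟨(hX'prop b).mpr ⟨hbc.1, hbv⟩, (hX'prop c).mpr ⟨hcX, hcv⟩,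
                  hbc.2.2.1, hbc.2.2.2⟩
        rcases key w hpath with e | ⟨_, s0, hs0, hs0w⟩
        · exact absurd e hwv
        · exact ⟨s0, hs0, hs0w⟩
      have hchainA : ∀ u w', Relation.ReflTransGen (stepRel φ α β (X \ {v})) u w' →
          u ∈ A → w' ∈ A := by
        intro u w' hp hu
        induction hp with
        | refl => exact hu
        | @tail b c hb hbc ih =>
          rcases hunionAB c hbc.2.1 with h | h
          · exact h
          · exact absurd (Or.inl (hlab b ih c h)) hbc.2.2.2
      have hchainB : ∀ u w', Relation.ReflTransGen (stepRel φ α β (X \ {v})) u w' →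
          u ∈ B → w' ∈ B := by
        intro u w' hp hu
        induction hp with
        | refl => exact hu
        | @tail b c hb hbc ih =>
          rcases hunionAB c hbc.2.1 with h | h
          · exact absurd (Or.inr ⟨(hlab c h b ih).2, (hlab c h b ih).1⟩) hbc.2.2.2
          · exact h
      -- produce S-elements on each side
      obtain ⟨a0, ha0⟩ := hA
      obtain ⟨b0, hb0⟩ := hB
      have ha0X := (hX'prop a0).mp (hAX' ha0)
      have hb0X := (hX'prop b0).mp (hBX' hb0)
      obtain ⟨sA, hsA, hsApath⟩ := hext a0 ha0X.1 ha0X.2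
      obtain ⟨sB, hsB, hsBpath⟩ := hext b0 hb0X.1 hb0X.2
      have hsAA : sA ∈ A := by
        rcases hunionAB sA ((hX'prop sA).mpr ⟨hsA.1, hsA.2.1⟩) with h | h
        · exact h
        · exfalso
          have hmem : a0 ∈ A ∩ B := ⟨ha0, hchainB sA a0 hsApath h⟩
          rw [hABdisj] at hmem
          exact hmem
      have hsBB : sB ∈ B := by
        rcases hunionAB sB ((hX'prop sB).mpr ⟨hsB.1, hsB.2.1⟩) with h | h
        · exfalso
          have hmem : b0 ∈ A ∩ B := ⟨hchainA sB b0 hsBpath h, hb0⟩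
          rw [hABdisj] at hmem
          exact hmem
        · exact h
      -- the common Dset of S-elements with v
      have hbase : Dset φ sB v = Dset φ sA v := by
        have hDab : Dset φ sA sB = {α, β} := by
          unfold Dset
          rw [(hlab sA hsAA sB hsBB).1, (hlab sA hsAA sB hsBB).2]
        rcases hU2' sA sB v (hdisj sA hsAA sB hsBB) hsA.2.1 hsB.2.1 with h | h | h
        · exact absurd (dset_to_ppair (h.symm.trans hDab)) hsA.2.2
        · exact absurd (dset_to_ppair (h.symm.trans hDab)) hsB.2.2
        · exact h.symm
      have hcommon : ∀ u, u ∈ X → u ≠ v → ¬ Ppair φ α β u v →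
          Dset φ u v = Dset φ sA v := by
        intro u huX huv huP
        rcases hunionAB u ((hX'prop u).mpr ⟨huX, huv⟩) with huA | huB
        · have h1 : Dset φ u sB = {α, β} := by
            unfold Dset
            rw [(hlab u huA sB hsBB).1, (hlab u huA sB hsBB).2]
          rcases hU2' u sB v (hdisj u huA sB hsBB) huv hsB.2.1 with h | h | h
          · exact absurd (dset_to_ppair (h.symm.trans h1)) huP
          · exact absurd (dset_to_ppair (h.symm.trans h1)) hsB.2.2
          · exact h.trans hbase
        · have h1 : Dset φ sA u = {α, β} := by
            unfold Dset
            rw [(hlab sA hsAA u huB).1, (hlab sA hsAA u huB).2]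
          rcases hU2' sA u v (hdisj sA hsAA u huB) hsA.2.1 huv with h | h | h
          · exact absurd (dset_to_ppair (h.symm.trans h1)) hsA.2.2
          · exact absurd (dset_to_ppair (h.symm.trans h1)) huP
          · exact h.symm
      -- every vertex of X' is v-incomparable to the (α,β)-pattern
      have hSall : ∀ u ∈ X, u ≠ v → ¬ Ppair φ α β u v := by
        intro w0 hw0X hw0v
        by_contra hPn
        obtain ⟨s0, hs0, hs0path⟩ := hext w0 hw0X hw0v
        have hlast : ∀ w', Relation.ReflTransGen (stepRel φ α β (X \ {v})) s0 w' →
            Ppair φ α β w' v →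
            ∃ p q', (q' ∈ X ∧ q' ≠ v ∧ ¬ Ppair φ α β q' v) ∧
              (p ∈ X ∧ p ≠ v ∧ Ppair φ α β p v) ∧
              stepRel φ α β (X \ {v}) q' p ∧
              Relation.ReflTransGen (stepRel φ α β (X \ {v})) s0 q' := by
          intro w' hp
          induction hp with
          | refl => exact fun hP => absurd hP hs0.2.2
          | @tail b c hb hbc ih =>
            intro hPc
            by_cases hPb : Ppair φ α β b v
            · exact ih hPb
            · have hbX' := (hX'prop b).mp hbc.1
              have hcX' := (hX'prop c).mp hbc.2.1
              exact ⟨c, b, ⟨hbX'.1, hbX'.2, hPb⟩, ⟨hcX'.1, hcX'.2, hPc⟩, hbc, hb⟩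
        obtain ⟨p, q', hq'S, hpS, hqp, hs0q⟩ := hlast w0 hs0path hPn
        have hDqv : Dset φ q' v = Dset φ sA v := hcommon q' hq'S.1 hq'S.2.1 hq'S.2.2
        have hDpq : Dset φ p q' = Dset φ sA v := by
          rcases hU2' p q' v (Ne.symm hqp.2.2.1) hpS.2.1 hq'S.2.1 with h | h | h
          · exact absurd (dset_to_ppair (h.trans (ppair_to_dset hpS.2.2)))
              (fun hh => hqp.2.2.2 (ppair_symm hh))
          · exact h.trans hDqv
          · exact absurd (dset_to_ppair (h.symm.trans (ppair_to_dset hpS.2.2))) hq'S.2.2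
        have hpq' := Set.pair_eq_pair_iff.mp (hDpq.trans hDqv.symm)
        have hs0X' := (hX'prop s0).mpr ⟨hs0.1, hs0.2.1⟩
        rcases hunionAB s0 hs0X' with hs0A | hs0B
        · -- all of p, q' in A ; z := sB
          have hq'A : q' ∈ A := hchainA s0 q' hs0q hs0A
          have hpA : p ∈ A := hchainA q' p (Relation.ReflTransGen.single hqp) hq'A
          have hvzD : Dset φ v sB = Dset φ q' v := by
            rw [dset_comm]
            exact (hcommon sB hsB.1 hsB.2.1 hsB.2.2).trans hDqv.symm
          have hvz' := Set.pair_eq_pair_iff.mp hvzD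
          exact Qfull hU1 (Ne.symm hqp.2.2.1) hpS.2.1 (hdisj p hpA sB hsBB) hq'S.2.1
            (hdisj q' hq'A sB hsBB) (Ne.symm hsB.2.1)
            (hlab p hpA sB hsBB).1 (hlab p hpA sB hsBB).2
            (hlab q' hq'A sB hsBB).1 (hlab q' hq'A sB hsBB).2
            hpS.2.2 hpq' hvz' hq'S.2.2
        · -- all of p, q' in B ; z := sA, colors swapped
          have hq'B : q' ∈ B := hchainB s0 q' hs0q hs0B
          have hpB : p ∈ B := hchainB q' p (Relation.ReflTransGen.single hqp) hq'B
          have hvzD : Dset φ v sA = Dset φ q' v := by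
            rw [dset_comm]
            exact hDqv.symm
          have hvz' := Set.pair_eq_pair_iff.mp hvzD
          exact Qfull hU1 (Ne.symm hqp.2.2.1) hpS.2.1
            (Ne.symm (hdisj sA hsAA p hpB)) hq'S.2.1
            (Ne.symm (hdisj sA hsAA q' hq'B)) (Ne.symm hsA.2.1)
            (hlab sA hsAA p hpB).2 (hlab sA hsAA p hpB).1
            (hlab sA hsAA q' hq'B).2 (hlab sA hsAA q' hq'B).1
            (ppair_swap hpS.2.2) hpq' hvz' (fun h => hq'S.2.2 (ppair_swap h))
      have hDall : ∀ u, u ∈ X → u ≠ v →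
          (φ u v = φ sA v ∧ φ v u = φ v sA) ∨ (φ u v = φ v sA ∧ φ v u = φ sA v) := by
        intro u huX huv
        exact Set.pair_eq_pair_iff.mp (hcommon u huX huv (hSall u huX huv))
      have hvsub : {v} ⊆ X := by
        intro w hw
        rw [Set.mem_singleton_iff] at hw
        exact hw ▸ hv
      by_cases hgd : φ sA v = φ v sA
      · -- complete node at v
        refine ⟨{v}, X \ {v}, φ sA v, φ sA v, ⟨v, rfl⟩, ⟨a0, hAX' ha0⟩, ?_, ?_, ?_⟩
        · exact Set.inter_diff_self _ _
        · exact Set.union_diff_cancel hvsub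
        · intro a ha b hb
          rw [Set.mem_singleton_iff] at ha
          subst ha
          have hbX := (hX'prop b).mp hb
          rcases hDall b hbX.1 hbX.2 with ⟨e1, e2⟩ | ⟨e1, e2⟩
          · exact ⟨e2.trans hgd.symm, e1⟩
          · exact ⟨e2, e1.trans hgd.symm⟩
      · -- linear node at v
        by_cases hV1 : ∃ u, u ∈ X ∧ u ≠ v ∧ φ u v = φ sA v ∧ φ v u = φ v sA
        · obtain ⟨u1, hu1⟩ := hV1
          refine ⟨{u | u ∈ X ∧ u ≠ v ∧ φ u v = φ sA v ∧ φ v u = φ v sA},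
            X \ {u | u ∈ X ∧ u ≠ v ∧ φ u v = φ sA v ∧ φ v u = φ v sA},
            φ sA v, φ v sA, ⟨u1, hu1⟩, ⟨v, hv, fun hc => hc.2.1 rfl⟩, ?_,
            Set.union_diff_cancel (fun u hu => hu.1), ?_⟩
          · exact Set.inter_diff_self _ _
          · intro u hu b hb
            by_cases hbv : b = v
            · subst hbv
              exact ⟨hu.2.2.1, hu.2.2.2⟩
            · rcases hDall b hb.1 hbv with ⟨e1, e2⟩ | ⟨e1, e2⟩
              · exact absurd ⟨hb.1, hbv, e1, e2⟩ hb.2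
              · exact forcedLabel hU1 hgd (fun e => hb.2 (e ▸ hu)) hu.2.1 hbv
                  hu.2.2.1 hu.2.2.2 e1 e2
        · -- V₁ empty : v is first
          refine ⟨{v}, X \ {v}, φ sA v, φ v sA, ⟨v, rfl⟩, ⟨a0, hAX' ha0⟩, ?_, ?_, ?_⟩
          · exact Set.inter_diff_self _ _
          · exact Set.union_diff_cancel hvsub
          · intro a ha b hb
            rw [Set.mem_singleton_iff] at ha
            subst ha
            have hbX := (hX'prop b).mp hb
            rcases hDall b hbX.1 hbX.2 with ⟨e1, e2⟩ | ⟨e1, e2⟩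
            · exact absurd ⟨hbX.1, hbX.2, e1, e2⟩ (fun hh => hV1 ⟨b, hh⟩)
            · exact ⟨e2, e1⟩
    · -- CASE 1 : disconnected
      push_neg at hconn
      obtain ⟨x, hx, y, hy, hxy⟩ := hconn
      by_cases hab : α = β
      · subst hab
        refine ⟨{u | u ∈ X ∧ Relation.ReflTransGen (stepRel φ α α X) x u},
          X \ {u | u ∈ X ∧ Relation.ReflTransGen (stepRel φ α α X) x u}, α, α,
          ⟨x, hx, Relation.ReflTransGen.refl⟩, ⟨y, hy, fun hc => hxy hc.2⟩, ?_,
          Set.union_diff_cancel (fun u hu => hu.1), ?_⟩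
        · exact Set.inter_diff_self _ _
        · intro u hu w hw
          have hne : u ≠ w := fun e => hw.2 (e ▸ hu)
          have hP : Ppair φ α α u w := by
            by_contra hc
            exact hw.2 ⟨hw.1, hu.2.tail ⟨hu.1, hw.1, hne, hc⟩⟩
          rcases hP with ⟨e1, e2⟩ | ⟨e1, e2⟩ <;> exact ⟨e1, e2⟩
      · -- α ≠ β : use the bottom element of the linear order on components
        have hPget : ∀ u w, u ∈ X → w ∈ X → ¬ Relation.ReflTransGen (stepRel φ α β X) u w →
            Ppair φ α β u w ∧ u ≠ w := by
          intro u w hu hw hn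
          have hne : u ≠ w := fun e => hn (e ▸ Relation.ReflTransGen.refl)
          refine ⟨?_, hne⟩
          by_contra hc
          exact hn (Relation.ReflTransGen.single ⟨hu, hw, hne, hc⟩)
        have hαof : ∀ u w, u ∈ X → w ∈ X → ¬ Relation.ReflTransGen (stepRel φ α β X) u w →
            φ u w = α → φ w u = β := by
          intro u w hu hw hn h1
          rcases (hPget u w hu hw hn).1 with ⟨e1, e2⟩ | ⟨e1, e2⟩
          · exact e2
          · exact absurd (e1.symm.trans h1) (Ne.symm hab)
        set R : V → V → Prop := fun u w => Relation.ReflTransGen (stepRel φ α β X) u w ∨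
          (¬ Relation.ReflTransGen (stepRel φ α β X) u w ∧ φ u w = α) with hR
        have htot : ∀ a ∈ X, ∀ b ∈ X, R a b ∨ R b a := by
          intro a ha b hb
          by_cases hr : Relation.ReflTransGen (stepRel φ α β X) a b
          · exact Or.inl (Or.inl hr)
          · rcases (hPget a b ha hb hr).1 with ⟨e1, e2⟩ | ⟨e1, e2⟩
            · exact Or.inl (Or.inr ⟨hr, e1⟩)
            · exact Or.inr (Or.inr ⟨fun hr' => hr (rtg_symm hr'), e2⟩)
        have htr : ∀ a ∈ X, ∀ b ∈ X, ∀ c ∈ X, R a b → R b c → R a c := by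
          intro a ha b hb c hc h1 h2
          rcases h1 with h1 | ⟨hn1, hα1⟩
          · rcases h2 with h2 | ⟨hn2, hα2⟩
            · exact Or.inl (h1.trans h2)
            · have hnac : ¬ Relation.ReflTransGen (stepRel φ α β X) a c :=
                fun h => hn2 ((rtg_symm h1).trans h)
              exact Or.inr ⟨hnac, (chainP hU1 hab hc h1 hnac).1.trans hα2⟩
          · rcases h2 with h2 | ⟨hn2, hα2⟩
            · have hnac : ¬ Relation.ReflTransGen (stepRel φ α β X) a c :=
                fun h => hn1 (h.trans (rtg_symm h2))
              have hc2 := chainP hU1 hab ha h2 (fun h => hn1 (rtg_symm h))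
              exact Or.inr ⟨hnac, hc2.2.symm.trans hα1⟩
            · have hnac : ¬ Relation.ReflTransGen (stepRel φ α β X) a c := by
                intro hac
                have h' := chainP hU1 hab hb hac hn1
                have hcb : φ c b = α := h'.1.symm.trans hα1
                have hcb2 : φ c b = β := hαof b c hb hc hn2 hα2
                exact hab (hcb.symm.trans hcb2)
              refine Or.inr ⟨hnac, ?_⟩
              by_contra hne
              rcases htot a ha c hc with h | h
              · rcases h with h | ⟨_, h⟩
                · exact hnac h
                · exact hne h
              · rcases h with h | ⟨hn3, hca⟩
                · exact hnac (rtg_symm h)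
                · have hba : φ b a = β := hαof a b ha hb hn1 hα1
                  have hcb : φ c b = β := hαof b c hb hc hn2 hα2
                  have hac2 : φ a c = β := hαof c a hc ha hn3 hca
                  exact triC3 hU1 hab (hPget a b ha hb hn1).2
                    (fun e => hnac (e ▸ Relation.ReflTransGen.refl))
                    (hPget b c hb hc hn2).2 hα1 hba hα2 hcb hca hac2
        have hmem : ∀ a, a ∈ hfin.toFinset ↔ a ∈ X := fun a => Set.Finite.mem_toFinset hfin
        obtain ⟨m, hm, hmin⟩ := exists_bot R hfin.toFinset ⟨x, (hmem x).mpr hx⟩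
          (fun a ha b hb => htot a ((hmem a).mp ha) b ((hmem b).mp hb))
          (fun a ha b hb c hc => htr a ((hmem a).mp ha) b ((hmem b).mp hb) c ((hmem c).mp hc))
        have hmX : m ∈ X := (hmem m).mp hm
        obtain ⟨w1, hw1X, hw1C⟩ : ∃ w1, w1 ∈ X ∧
            ¬ (w1 ∈ X ∧ Relation.ReflTransGen (stepRel φ α β X) m w1) := by
          by_cases hxc : x ∈ X ∧ Relation.ReflTransGen (stepRel φ α β X) m x
          · exact ⟨y, hy, fun hyc => hxy ((rtg_symm hxc.2).trans hyc.2)⟩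
          · exact ⟨x, hx, hxc⟩
        refine ⟨{u | u ∈ X ∧ Relation.ReflTransGen (stepRel φ α β X) m u},
          X \ {u | u ∈ X ∧ Relation.ReflTransGen (stepRel φ α β X) m u}, α, β,
          ⟨m, hmX, Relation.ReflTransGen.refl⟩, ⟨w1, hw1X, hw1C⟩, ?_,
          Set.union_diff_cancel (fun u hu => hu.1), ?_⟩
        · exact Set.inter_diff_self _ _
        · intro u hu w hw
          have hnmw : ¬ Relation.ReflTransGen (stepRel φ α β X) m w := fun h => hw.2 ⟨hw.1, h⟩
          have hα1 : φ m w = α := by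
            rcases hmin w ((hmem w).mpr hw.1) with h | ⟨_, h⟩
            · exact absurd h hnmw
            · exact h
          have hβ1 : φ w m = β := hαof m w hmX hw.1 hnmw hα1
          have hch := chainP hU1 hab hw.1 hu.2 hnmw
          exact ⟨hch.1.symm.trans hα1, hch.2.symm.trans hβ1⟩

end SuffC

/-- Theorem: an arbitrary 2-structure is uniformly non-prime iff `δ_g` is a
symbolic ultrametric. -/
theorem unp_iff_symbolicUltrametric {V Υ : Type*} (φ : V → V → Υ) :
    Unp φ ↔ SymbolicUltrametric φ := by
  constructor
  · intro h
    exact ⟨unp_condU1 h, unp_condU2 h⟩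
  · rintro ⟨hU1, hU2⟩
    intro X hX3 hprime
    have hfin : X.Finite := by
      by_contra hinf
      rw [Set.Infinite.ncard hinf] at hX3
      omega
    obtain ⟨A, B, α, β, hA, hB, hdisj, hunion, hlab⟩ :=
      split_of_SU hU1 hU2 X.ncard X hfin rfl (by omega)
    have hmod : ∀ (C D : Set V) (γ δ : Υ), C ∪ D = X → C ∩ D = ∅ →
        (∀ a ∈ C, ∀ b ∈ D, φ a b = γ ∧ φ b a = δ) → IsModuleOn φ X C := by
      intro C D γ δ hu hd hl
      refine ⟨hu ▸ Set.subset_union_left, ?_⟩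
      intro x hx y hy z hz
      have hzD : z ∈ D := by
        have : z ∈ C ∪ D := by rw [hu]; exact hz.1
        rcases this with h | h
        · exact absurd h hz.2
        · exact h
      exact ⟨(hl x hx z hzD).1.trans (hl y hy z hzD).1.symm,
        (hl x hx z hzD).2.trans (hl y hy z hzD).2.symm⟩
    have hcontra : ∀ (C D : Set V) (γ δ : Υ), C ∪ D = X → C ∩ D = ∅ →
        (∀ a ∈ C, ∀ b ∈ D, φ a b = γ ∧ φ b a = δ) →
        (∃ c1 ∈ C, ∃ c2 ∈ C, c1 ≠ c2) → D.Nonempty → False := by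
      intro C D γ δ hu hd hl ⟨c1, hc1, c2, hc2, hne⟩ ⟨d0, hd0⟩
      rcases hprime C (hmod C D γ δ hu hd hl) with h | ⟨w, h⟩ | h
      · rw [h] at hc1
        exact hc1
      · rw [h] at hc1 hc2
        rw [Set.mem_singleton_iff] at hc1 hc2
        exact hne (hc1.trans hc2.symm)
      · have hd0C : d0 ∈ C := by
          rw [h]
          rw [← hu]
          exact Or.inr hd0
        have : d0 ∈ C ∩ D := ⟨hd0C, hd0⟩
        rw [hd] at this
        exact this
    by_cases hA2 : ∃ a1 ∈ A, ∃ a2 ∈ A, a1 ≠ a2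
    · exact hcontra A B α β hunion hdisj hlab hA2 hB
    · by_cases hB2 : ∃ b1 ∈ B, ∃ b2 ∈ B, b1 ≠ b2
      · exact hcontra B A β α (by rw [Set.union_comm]; exact hunion)
          (by rw [Set.inter_comm]; exact hdisj)
          (fun b hb a ha => ⟨(hlab a ha b hb).2, (hlab a ha b hb).1⟩) hB2 hA
      · push_neg at hA2 hB2
        obtain ⟨a0, ha0⟩ := hA
        obtain ⟨b0, hb0⟩ := hB
        have hsub : X ⊆ {a0, b0} := by
          intro w hw
          have : w ∈ A ∪ B := by rw [hunion]; exact hw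
          rcases this with h | h
          · exact Or.inl (hA2 w h a0 ha0)
          · exact Or.inr (hB2 w h b0 hb0)
        have hle := Set.ncard_le_ncard hsub (Set.toFinite _)
        have hle2 : ({a0, b0} : Set V).ncard ≤ 2 := by
          refine le_trans (Set.ncard_insert_le _ _) ?_
          rw [Set.ncard_singleton]
        omega
end

section
/- Let g be a reversible 2-structure such that G_i(g) is a di-cograph for every i ∈ Υ, and suppose g violates the triangle condition (U2). Then the collection C¹(g) of 1-clusters (leaf sets of non-parallel cotree vertices over all cotrees T_i, together with all singletons) is not a hierarchy: it contains two overlapping clusters. -/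
-- Auxiliary development ----------------------------------------------------
section Aux
open Relation
variable {V : Type*}

/-- adjacency (symmetric) relation of a digraph. -/
def adjR (E : V → V → Prop) (a b : V) : Prop := a ≠ b ∧ (E a b ∨ E b a)

/-- non-adjacency relation of a digraph. -/
def perpR (E : V → V → Prop) (a b : V) : Prop := a ≠ b ∧ ¬ E a b ∧ ¬ E b a

/-- step of a relation inside a set. -/
def stepIn (R : V → V → Prop) (S : Set V) (a b : V) : Prop := a ∈ S ∧ b ∈ S ∧ R a b

/-- connectivity of a relation on a set. -/
def ConnIn (R : V → V → Prop) (S : Set V) : Prop :=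
  ∀ x ∈ S, ∀ y ∈ S, Relation.ReflTransGen (stepIn R S) x y

/-- reachability set. -/
def reachIn (R : V → V → Prop) (S : Set V) (x : V) : Set V :=
  {w ∈ S | Relation.ReflTransGen (stepIn R S) x w}

lemma stepIn_symm {R : V → V → Prop} (h : ∀ a b, R a b → R b a) (S : Set V) :
    ∀ a b, stepIn R S a b → stepIn R S b a := fun _ _ ⟨h1, h2, h3⟩ => ⟨h2, h1, h _ _ h3⟩

lemma rtg_symm_s17 {R : V → V → Prop} (h : ∀ a b, R a b → R b a) {S : Set V} {x y : V}
    (hxy : Relation.ReflTransGen (stepIn R S) x y) :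
    Relation.ReflTransGen (stepIn R S) y x :=
  by haveI : Std.Symm (stepIn R S) := ⟨fun _ _ hs => stepIn_symm h S _ _ hs⟩; exact Std.Symm.symm _ _ hxy

lemma rtg_head {r : V → V → Prop} {a c : V} (h : Relation.ReflTransGen r a c) (hne : a ≠ c) :
    ∃ b, b ≠ a ∧ r a b := by
  induction h with
  | refl => exact absurd rfl hne
  | @tail b c hab hbc ih =>
    by_cases hb : a = b
    · subst hb
      exact ⟨c, fun h => hne h.symm, hbc⟩
    · exact ih hb

lemma rtg_cross {r : V → V → Prop} {Q : V → Prop} {a : V} :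
    ∀ {c : V}, Relation.ReflTransGen r a c → Q a → ¬Q c →
      ∃ p q, Relation.ReflTransGen r a p ∧ r p q ∧ Q p ∧ ¬Q q := by
  intro c h
  induction h with
  | refl => intro ha hc; exact absurd ha hc
  | @tail b c hab hbc ih =>
    intro ha hc
    by_cases hb : Q b
    · exact ⟨b, c, hab, hbc, hb, hc⟩
    · exact ih ha hb

lemma rtg_mono' {r r' : V → V → Prop} (h : ∀ a b, r a b → a = b ∨ r' a b) {x y : V}
    (hxy : Relation.ReflTransGen r x y) : Relation.ReflTransGen r' x y := by
  induction hxy with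
  | refl => exact .refl
  | @tail b c hab hbc ih =>
    rcases h _ _ hbc with rfl | hs
    · exact ih
    · exact ih.tail hs

end Aux

lemma rtg_mem {R : V → V → Prop} {S : Set V} {t p : V} (ht : t ∈ S)
    (h : Relation.ReflTransGen (stepIn R S) t p) : p ∈ S := by
  induction h with
  | refl => exact ht
  | tail _ hbc _ => exact hbc.2.1
section Tri
variable {V : Type*}

lemma inj3_s17 {a b c : V} (h1 : a ≠ b) (h2 : a ≠ c) (h3 : b ≠ c) :
    Function.Injective ![a, b, c] := by
  intro k l hkl
  fin_cases k <;> fin_cases l <;> simp_all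

lemma inj4_s17 {a b c d : V} (h1 : a ≠ b) (h2 : a ≠ c) (h3 : a ≠ d) (h4 : b ≠ c)
    (h5 : b ≠ d) (h6 : c ≠ d) : Function.Injective ![a, b, c, d] := by
  intro k l hkl
  fin_cases k <;> fin_cases l <;> simp_all

/-- the triple lemma: a vertex adjacent to both ends of a non-edge relates
to both ends in the same way. -/
lemma tri {E : V → V → Prop} (hD : IsDiCograph E) {u v w : V}
    (huv : u ≠ v) (huw : u ≠ w) (hvw : v ≠ w)
    (hn1 : ¬E u v) (hn2 : ¬E v u)
    (hwu : E w u ∨ E u w) (hwv : E w v ∨ E v w) :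
    (E u w ↔ E v w) ∧ (E w u ↔ E w v) := by
  obtain ⟨hD3, hA, hB, -, -, -, -, -⟩ := hD
  by_cases h1 : E u w <;> by_cases h2 : E w u <;> by_cases h3 : E v w <;> by_cases h4 : E w v
  · simp [h1, h2, h3, h4]
  -- (T,T,T,F): u↔w, v→w : A with ι=![v,w,u]
  · exact absurd ⟨![v, w, u], inj3_s17 hvw huv.symm huw.symm,
      by intro k l hkl; fin_cases k <;> fin_cases l <;>
        simp_all [FA, relOf, Fin.ext_iff]⟩ hA
  -- (T,T,F,T): u↔w, w→v : B with ι=![u,w,v]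
  · exact absurd ⟨![u, w, v], inj3_s17 huw huv hvw.symm,
      by intro k l hkl; fin_cases k <;> fin_cases l <;>
        simp_all [FB, relOf, Fin.ext_iff]⟩ hB
  · exact absurd hwv (by simp [h3, h4])
  -- (T,F,T,T): u→w, w↔v : A with ι=![u,w,v]
  · exact absurd ⟨![u, w, v], inj3_s17 huw huv hvw.symm,
      by intro k l hkl; fin_cases k <;> fin_cases l <;>
        simp_all [FA, relOf, Fin.ext_iff]⟩ hA
  · simp [h1, h2, h3, h4]
  -- (T,F,F,T): u→w→v : D3 with ι=![u,w,v]
  · exact absurd ⟨![u, w, v], inj3_s17 huw huv hvw.symm,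
      by intro k l hkl; fin_cases k <;> fin_cases l <;>
        simp_all [FD3, relOf, Fin.ext_iff]⟩ hD3
  · exact absurd hwv (by simp [h3, h4])
  -- (F,T,T,T): w→u, w↔v : B with ι=![v,w,u]
  · exact absurd ⟨![v, w, u], inj3_s17 hvw huv.symm huw.symm,
      by intro k l hkl; fin_cases k <;> fin_cases l <;>
        simp_all [FB, relOf, Fin.ext_iff]⟩ hB
  -- (F,T,T,F): v→w→u : D3 with ι=![v,w,u]
  · exact absurd ⟨![v, w, u], inj3_s17 hvw huv.symm huw.symm,
      by intro k l hkl; fin_cases k <;> fin_cases l <;>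
        simp_all [FD3, relOf, Fin.ext_iff]⟩ hD3
  · simp [h1, h2, h3, h4]
  · exact absurd hwv (by simp [h3, h4])
  · exact absurd hwu (by simp [h1, h2])
  · exact absurd hwu (by simp [h1, h2])
  · exact absurd hwu (by simp [h1, h2])
  · exact absurd hwu (by simp [h1, h2])

end Tri
section P4
variable {V : Type*}

/-- no induced symmetric path on four vertices in the adjacency sense. -/
lemma p4free {E : V → V → Prop} (hD : IsDiCograph E) {a b c d : V}
    (nab : a ≠ b) (nac : a ≠ c) (nad : a ≠ d) (nbc : b ≠ c) (nbd : b ≠ d) (ncd : c ≠ d)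
    (hab : E a b ∨ E b a) (hbc : E b c ∨ E c b) (hcd : E c d ∨ E d c)
    (hac1 : ¬E a c) (hac2 : ¬E c a) (had1 : ¬E a d) (had2 : ¬E d a)
    (hbd1 : ¬E b d) (hbd2 : ¬E d b) : False := by
  have t1 := tri hD nac nab nbc.symm hac1 hac2 hab.symm hbc
  have t2 := tri hD nbd nbc ncd.symm hbd1 hbd2 hbc.symm hcd
  obtain ⟨-, -, -, -, -, hNc, hN, hP4⟩ := hD
  by_cases h1 : E a b <;> by_cases h2 : E b a
  · -- symmetric: FP4
    have e1 : E c b := t1.1.mp h1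
    have e2 : E b c := t1.2.mp h2
    have e3 : E d c := t2.1.mp e2
    have e4 : E c d := t2.2.mp e1
    exact hP4 ⟨![a, b, c, d], inj4_s17 nab nac nad nbc nbd ncd,
      by intro k l hkl; fin_cases k <;> fin_cases l <;>
        simp_all [FP4, relOf, Fin.ext_iff] <;> decide⟩
  · -- arcs a→b, c→b, c→d : FN via ![d,c,b,a]
    have e1 : E c b := t1.1.mp h1
    have e2 : ¬E b c := fun h => h2 (t1.2.mpr h)
    have e3 : E c d := t2.2.mp e1
    have e4 : ¬E d c := fun h => e2 (t2.1.mpr h)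
    exact hN ⟨![d, c, b, a], inj4_s17 ncd.symm nbd.symm nad.symm nbc.symm nac.symm nab.symm,
      by intro k l hkl; fin_cases k <;> fin_cases l <;>
        simp_all [FN, relOf, Fin.ext_iff] <;> decide⟩
  · -- arcs b→a, b→c, d→c : FN via ![a,b,c,d]
    have e1 : ¬E c b := fun h => h1 (t1.1.mpr h)
    have e2 : E b c := t1.2.mp h2
    have e3 : E d c := t2.1.mp e2
    have e4 : ¬E c d := fun h => e1 (t2.2.mpr h)
    exact hN ⟨![a, b, c, d], inj4_s17 nab nac nad nbc nbd ncd,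
      by intro k l hkl; fin_cases k <;> fin_cases l <;>
        simp_all [FN, relOf, Fin.ext_iff] <;> decide⟩
  · exact hab.elim h1 h2

end P4
section Modules
variable {V : Type*}

lemma inter_module {E : V → V → Prop} {A B : Set V} (hA : IsGraphModule E A)
    (hB : IsGraphModule E B) : IsGraphModule E (A ∩ B) := by
  intro u hu v hv z hz
  by_cases hzA : z ∈ A
  · exact hB u hu.2 v hv.2 z (fun h => hz ⟨hzA, h⟩)
  · exact hA u hu.1 v hv.1 z hzA

lemma univ_strong (E : V → V → Prop) (x : V) :
    IsStrongGraphModule E (Set.univ : Set V) :=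
  ⟨⟨⟨x, trivial⟩, fun u _ v _ z hz => absurd trivial hz⟩,
    fun N _ h => h.2.2 (fun _ _ => trivial)⟩

lemma exists_min_strong [Fintype V] (E : V → V → Prop) (x y : V) :
    ∃ M, IsStrongGraphModule E M ∧ x ∈ M ∧ y ∈ M ∧
      ∀ N, IsStrongGraphModule E N → x ∈ N → y ∈ N → M ⊆ N := by
  classical
  set S : Set (Set V) := {M | IsStrongGraphModule E M ∧ x ∈ M ∧ y ∈ M} with hS
  have hfin : S.Finite := Set.toFinite _
  have hne : S.Nonempty := ⟨Set.univ, univ_strong E x, trivial, trivial⟩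
  obtain ⟨M, hMS, hmin'⟩ := hfin.exists_minimalFor id S hne
  have hmin : ∀ N ∈ S, N ⊆ M → M = N := fun N hN h => Set.Subset.antisymm (hmin' hN h) h
  refine ⟨M, hMS.1, hMS.2.1, hMS.2.2, ?_⟩
  intro N hN hxN hyN
  have hcomp : M ⊆ N ∨ N ⊆ M := by
    have hno : ¬ Overlap M N := hMS.1.2 N hN.1
    by_contra h
    push_neg at h
    exact hno ⟨⟨x, hMS.2.1, hxN⟩, h.1, h.2⟩
  rcases hcomp with h | h
  · exact h
  · have heq : M = N := hmin N ⟨hN, hxN, hyN⟩ h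
    exact heq ▸ Set.Subset.rfl

/-- a weak component of a module is a module. -/
lemma adj_reach_module {E : V → V → Prop} {M : Set V} (hM : IsGraphModule E M) (x : V) :
    IsGraphModule E (reachIn (adjR E) M x) := by
  set K := reachIn (adjR E) M x with hK
  intro u hu v hv z hz
  by_cases hzM : z ∈ M
  · have key : ∀ w, w ∈ K → ¬E w z ∧ ¬E z w := by
      intro w hw
      have hnz : ¬(E w z ∨ E z w) := by
        intro h
        exact hz ⟨hzM, hw.2.tail ⟨hw.1, hzM, ⟨fun he => hz (he ▸ hw), h⟩⟩⟩
      exact ⟨fun h => hnz (Or.inl h), fun h => hnz (Or.inr h)⟩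
    obtain ⟨hu1, hu2⟩ := key u hu
    obtain ⟨hv1, hv2⟩ := key v hv
    simp [hu1, hu2, hv1, hv2]
  · exact hM u hu.1 v hv.1 z hzM

/-- a non-adjacency component of a module of a di-cograph is a module. -/
lemma perp_reach_module {E : V → V → Prop} (hD : IsDiCograph E) {M : Set V}
    (hM : IsGraphModule E M) (x : V) :
    IsGraphModule E (reachIn (perpR E) M x) := by
  set K := reachIn (perpR E) M x with hK
  intro u hu v hv z hz
  by_cases hzM : z ∈ M
  · have adjz : ∀ w, w ∈ K → (E w z ∨ E z w) ∧ w ≠ z := by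
      intro w hw
      have hne : w ≠ z := fun he => hz (he ▸ hw)
      refine ⟨?_, hne⟩
      by_contra h
      push_neg at h
      exact hz ⟨hzM, hw.2.tail ⟨hw.1, hzM, ⟨hne, h.1, h.2⟩⟩⟩
    have main : ∀ w, Relation.ReflTransGen (stepIn (perpR E) M) u w → w ∈ K →
        (E u z ↔ E w z) ∧ (E z u ↔ E z w) := by
      intro w hw
      induction hw with
      | refl => exact fun _ => ⟨Iff.rfl, Iff.rfl⟩
      | @tail p q hp hpq ih =>
        intro hqK
        have hpK : p ∈ K := ⟨hpq.1, hu.2.trans hp⟩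
        have hperp : perpR E p q := hpq.2.2
        have t := tri hD hperp.1 (adjz p hpK).2 (adjz q hqK).2 hperp.2.1 hperp.2.2
          (Or.symm (adjz p hpK).1) (Or.symm (adjz q hqK).1)
        exact ⟨(ih hpK).1.trans t.1, (ih hpK).2.trans t.2⟩
    have hpath : Relation.ReflTransGen (stepIn (perpR E) M) u v :=
      (rtg_symm_s17 (fun a b h => ⟨h.1.symm, h.2.2, h.2.1⟩) hu.2).trans hv.2
    exact main v hpath hv
  · exact hM u hu.1 v hv.1 z hzM

/-- a reach-component of a strong module is strong, given the key transfer property. -/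
lemma reach_strong {E R : V → V → Prop} {M : Set V} (hM : IsStrongGraphModule E M)
    {x : V} (hx : x ∈ M) (hsym : ∀ a b, R a b → R b a)
    (hmod : IsGraphModule E (reachIn R M x))
    (hkey : ∀ a c b, a ∈ reachIn R M x → b ∈ M → b ∉ reachIn R M x → c ∈ reachIn R M x →
      (E a c ↔ E b c) → (E c a ↔ E c b) → ¬ R a c) :
    IsStrongGraphModule E (reachIn R M x) := by
  classical
  set K := reachIn R M x with hK
  have hxK : x ∈ K := ⟨hx, .refl⟩
  refine ⟨⟨⟨x, hxK⟩, hmod⟩, ?_⟩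
  rintro N ⟨hNne, hNmod⟩ ⟨⟨a, haK, haN⟩, hKN, hNK⟩
  obtain ⟨c, hcK, hcN⟩ := Set.not_subset.mp hKN
  by_cases hb : ∀ b ∈ N, b ∈ M → b ∈ K
  · refine hM.2 N ⟨hNne, hNmod⟩ ⟨⟨a, haK.1, haN⟩, ?_, ?_⟩
    · exact fun hMN => hcN (hMN hcK.1)
    · obtain ⟨b, hbN, hbK⟩ := Set.not_subset.mp hNK
      exact fun hNM => hbK (hb b hbN (hNM hbN))
  · push_neg at hb
    obtain ⟨b, hbN, hbM, hbK⟩ := hb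
    have hNM : IsGraphModule E (N ∩ M) := inter_module hNmod hM.1.2
    have nocross : ∀ p, p ∈ K → p ∈ N → ∀ q, q ∈ K → q ∉ N → ¬ R p q := by
      intro p hpK hpN q hqK hqN
      have h := hNM p ⟨hpN, hpK.1⟩ b ⟨hbN, hbM⟩ q (fun hq => hqN hq.1)
      exact hkey p q b hpK hbM hbK hqK h.1 h.2
    have hpath : Relation.ReflTransGen (stepIn R M) a c :=
      (rtg_symm_s17 hsym haK.2).trans hcK.2
    obtain ⟨p, q, hap, hpq, hpN, hqN⟩ := rtg_cross (Q := fun w => w ∈ N) hpath haN hcN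
    have hpK : p ∈ K := ⟨hpq.1, haK.2.trans hap⟩
    have hqK : q ∈ K := ⟨hpq.2.1, (haK.2.trans hap).tail hpq⟩
    exact nocross p hpK hpN q hqK hqN hpq.2.2

end Modules
section Seinsche
variable {V : Type*}

/-- induction step for Seinsche's theorem. -/
lemma step_lemma {A B : V → V → Prop}
    (hsymA : ∀ a b, A a b → A b a)
    (hP4 : ∀ a b c d : V, a ≠ c → a ≠ d → b ≠ d → A a b → A b c → A c d →
      ¬A a c → ¬A a d → ¬A b d → False)
    (hBA : ∀ a b, B a b → ¬A a b)
    {S : Set V} {s : V} (hs : s ∈ S)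
    (hnc : ¬ ConnIn A (S \ {s})) (hCA : ConnIn A S) (hCB : ConnIn B S) : False := by
  classical
  set S' := S \ {s} with hS'
  have hdisc : ∃ u ∈ S', ∃ v ∈ S', ¬ Relation.ReflTransGen (stepIn A S') u v := by
    by_contra h; push_neg at h; exact hnc h
  obtain ⟨u, hu, v, hv, huv⟩ := hdisc
  -- if s has no A-edge into the reach set of t in S', then reach in S from t stays in S'
  have reach_ext : ∀ t, t ∈ S' →
      (∀ r, Relation.ReflTransGen (stepIn A S') t r → ¬ A s r) →
      ∀ w, Relation.ReflTransGen (stepIn A S) t w →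
        Relation.ReflTransGen (stepIn A S') t w := by
    intro t ht hno w hw
    induction hw with
    | refl => exact .refl
    | @tail p q hp hpq ih =>
      by_cases hq : q = s
      · subst hq
        exact absurd (hsymA _ _ hpq.2.2) (hno p ih)
      · exact ih.tail ⟨rtg_mem ht ih, ⟨hpq.2.1, hq⟩, hpq.2.2⟩
  -- s has an A-edge into the reach set of u, and of v
  have hr1 : ∃ r, Relation.ReflTransGen (stepIn A S') u r ∧ A s r := by
    by_contra h; push_neg at h
    exact huv (reach_ext u hu h v (hCA u hu.1 v hv.1))
  obtain ⟨r1, hr1path, hr1A⟩ := hr1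
  have hr2 : ∃ r, Relation.ReflTransGen (stepIn A S') v r ∧ A s r := by
    by_contra h; push_neg at h
    exact huv (rtg_symm_s17 hsymA (reach_ext v hv h u (hCA v hv.1 u hu.1)))
  obtain ⟨r2, hr2path, hr2A⟩ := hr2
  by_cases hall : ∀ t ∈ S', A s t
  · -- s is A-adjacent to everything: B-connectivity fails
    have hsu : s ≠ u := fun he => hu.2 (he ▸ rfl)
    obtain ⟨c, hcne, hstep⟩ := rtg_head (hCB s hs u hu.1) hsu
    exact hBA s c hstep.2.2 (hall c ⟨hstep.2.1, fun he => hcne (by simpa using he)⟩)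
  · push_neg at hall
    obtain ⟨t, ht, hst⟩ := hall
    -- s has an A-edge into the reach set T of t
    have hTedge : ∃ r, Relation.ReflTransGen (stepIn A S') t r ∧ A s r := by
      by_contra h; push_neg at h
      have h1 := reach_ext t ht h u (hCA t ht.1 u hu.1)
      exact h r1 (h1.trans hr1path) hr1A
    obtain ⟨rT, hrT, hrTA⟩ := hTedge
    -- crossing: walk back from rT to t, A-adjacency to s flips
    obtain ⟨p, q, hrp, hpq, hQp, hQq⟩ :=
      rtg_cross (Q := fun w => A s w) (rtg_symm_s17 hsymA hrT) hrTA hst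
    have htp : Relation.ReflTransGen (stepIn A S') t p := hrT.trans hrp
    have htq : Relation.ReflTransGen (stepIn A S') t q := htp.tail hpq
    -- choose w with an s-edge outside the reach set of t
    have hw : ∃ w, w ∈ S' ∧ A s w ∧ ¬ Relation.ReflTransGen (stepIn A S') t w := by
      by_cases h1 : Relation.ReflTransGen (stepIn A S') t r1
      · refine ⟨r2, rtg_mem hv hr2path, hr2A, fun h2 => ?_⟩
        have htu : Relation.ReflTransGen (stepIn A S') t u :=
          h1.trans (rtg_symm_s17 hsymA hr1path)
        exact huv ((rtg_symm_s17 hsymA htu).trans (h2.trans (rtg_symm_s17 hsymA hr2path)))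
      · exact ⟨r1, rtg_mem hu hr1path, hr1A, h1⟩
    obtain ⟨w, hwS, hwA, hwT⟩ := hw
    have hwp : ¬ A p w := fun h => hwT (htp.tail ⟨rtg_mem ht htp, hwS, h⟩)
    have hwq : ¬ A q w := fun h => hwT (htq.tail ⟨rtg_mem ht htq, hwS, h⟩)
    have hne1 : w ≠ p := fun he => hwT (he ▸ htp)
    have hne2 : w ≠ q := fun he => hwT (he ▸ htq)
    have hne3 : s ≠ q := fun he => (rtg_mem ht htq).2 (he ▸ rfl)
    exact hP4 w s p q hne1 hne2 hne3 (hsymA s w hwA) hQp hpq.2.2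
      (fun h => hwp (hsymA w p h)) (fun h => hwq (hsymA w q h)) hQq

/-- Seinsche's theorem: no set is both connected and co-connected. -/
lemma seinsche [Fintype V] {A : V → V → Prop}
    (hsym : ∀ a b, A a b → A b a) (hirr : ∀ a, ¬ A a a)
    (hP4 : ∀ a b c d : V, a ≠ c → a ≠ d → b ≠ d → A a b → A b c → A c d →
      ¬A a c → ¬A a d → ¬A b d → False) :
    ∀ n : ℕ, ∀ S : Set V, S.ncard ≤ n → 2 ≤ S.ncard →
      ConnIn A S → ConnIn (fun a b => a ≠ b ∧ ¬A a b) S → False := by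
  classical
  set B : V → V → Prop := fun a b => a ≠ b ∧ ¬A a b with hB
  have hsymB : ∀ a b, B a b → B b a := fun a b h => ⟨h.1.symm, fun h' => h.2 (hsym _ _ h')⟩
  have hP4B : ∀ a b c d : V, a ≠ c → a ≠ d → b ≠ d → B a b → B b c → B c d →
      ¬B a c → ¬B a d → ¬B b d → False := by
    intro a b c d nac nad nbd hab hbc hcd hnac hnad hnbd
    have hAac : A a c := by by_contra h; exact hnac ⟨nac, h⟩
    have hAad : A a d := by by_contra h; exact hnad ⟨nad, h⟩
    have hAbd : A b d := by by_contra h; exact hnbd ⟨nbd, h⟩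
    exact hP4 c a d b hcd.1 hbc.1.symm hab.1
      (hsym a c hAac) hAad (hsym b d hAbd)
      (fun h => hcd.2 h) (fun h => hbc.2 (hsym c b h)) (fun h => hab.2 h)
  intro n
  induction n with
  | zero => intro S h1 h2; omega
  | succ n ih =>
    intro S hle h2 hCA hCB
    by_cases hsmall : S.ncard ≤ n
    · exact ih S hsmall h2 hCA hCB
    · by_cases h2' : S.ncard = 2
      · obtain ⟨a, b, hab, rfl⟩ := Set.ncard_eq_two.mp h2'
        have haS : a ∈ ({a, b} : Set V) := by simp
        have hbS : b ∈ ({a, b} : Set V) := by simp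
        obtain ⟨c, hcne, hstep⟩ := rtg_head (hCA a haS b hbS) hab
        have hcb : c = b := by
          rcases hstep.2.1 with h | h
          · exact absurd h hcne
          · exact h
        obtain ⟨d, hdne, hstep'⟩ := rtg_head (hCB a haS b hbS) hab
        have hdb : d = b := by
          rcases hstep'.2.1 with h | h
          · exact absurd h hdne
          · exact h
        have hAab : A a b := hcb ▸ hstep.2.2
        have hBab : B a b := hdb ▸ hstep'.2.2
        exact hBab.2 hAab
      · -- ncard S ≥ 3
        have h3 : 3 ≤ S.ncard := by omega
        obtain ⟨s, hs⟩ := Set.nonempty_of_ncard_ne_zero (s := S) (by omega)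
        have hcard' : (S \ {s}).ncard = S.ncard - 1 := Set.ncard_diff_singleton_of_mem hs
        by_cases hA' : ConnIn A (S \ {s})
        · have hB' : ¬ ConnIn B (S \ {s}) := by
            intro hB'
            exact ih (S \ {s}) (by omega) (by omega) hA' hB'
          exact step_lemma hsymB hP4B (fun a b h hb => hb.2 h) hs hB' hCB hCA
        · exact step_lemma hsym hP4 (fun a b h => h.2) hs hA' hCA hCB

end Seinsche
section Main
variable {V Υ : Type*}

lemma Dset_comm (φ : V → V → Υ) (u v : V) : Dset φ u v = Dset φ v u :=
  Set.pair_comm _ _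

lemma adj_out {E : V → V → Prop} {M : Set V} {x b c : V}
    (hc : c ∈ reachIn (adjR E) M x) (hbM : b ∈ M) (hb : b ∉ reachIn (adjR E) M x) :
    ¬E c b ∧ ¬E b c := by
  have hne : c ≠ b := fun he => hb (he ▸ hc)
  have h : ¬(E c b ∨ E b c) := fun h => hb ⟨hbM, hc.2.tail ⟨hc.1, hbM, hne, h⟩⟩
  exact ⟨fun h' => h (Or.inl h'), fun h' => h (Or.inr h')⟩

lemma perp_out {E : V → V → Prop} {M : Set V} {x b c : V}
    (hc : c ∈ reachIn (perpR E) M x) (hbM : b ∈ M) (hb : b ∉ reachIn (perpR E) M x) :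
    E c b ∨ E b c := by
  have hne : c ≠ b := fun he => hb (he ▸ hc)
  by_contra h
  push_neg at h
  exact hb ⟨hbM, hc.2.tail ⟨hc.1, hbM, hne, h.1, h.2⟩⟩

/-- The key lemma: a 1-cluster containing `x, y` but not `z`. -/
lemma key_cluster [Fintype V] (φ : V → V → Υ) (hrev : Reversible φ)
    (hU1 : CondU1 φ) {x y z : V} (hxy : x ≠ y) (hxz : x ≠ z) (hyz : y ≠ z)
    (h1 : Dset φ x y ≠ Dset φ x z) (h2 : Dset φ x y ≠ Dset φ y z) :
    ∃ M, IsOneCluster (Ggraph φ (φ x y)) M ∧ x ∈ M ∧ y ∈ M ∧ z ∉ M := by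
  classical
  set E : V → V → Prop := Ggraph φ (φ x y) with hE
  have hD : IsDiCograph E := hU1 (φ x y)
  have hExy : E x y := ⟨hxy, rfl⟩
  have hnxz : ¬E x z := by
    rintro ⟨-, h⟩
    have h' : φ z x = φ y x := hrev x z x y hxz hxy h
    exact h1 (by simp [Dset, h, h'])
  have hnzx : ¬E z x := by
    rintro ⟨-, h⟩
    have h' : φ x z = φ y x := hrev z x x y hxz.symm hxy h
    exact h1 (by rw [Dset, Dset, h, h', Set.pair_comm])
  have hnyz : ¬E y z := by
    rintro ⟨-, h⟩
    have h' : φ z y = φ y x := hrev y z x y hyz hxy h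
    exact h2 (by simp [Dset, h, h'])
  have hnzy : ¬E z y := by
    rintro ⟨-, h⟩
    have h' : φ y z = φ y x := hrev z y x y hyz.symm hxy h
    exact h2 (by rw [Dset, Dset, h, h', Set.pair_comm])
  obtain ⟨M, hMstrong, hxM, hyM, hmin⟩ := exists_min_strong E x y
  have hMmod : IsGraphModule E M := hMstrong.1.2
  have hadjsym : ∀ a b : V, adjR E a b → adjR E b a := fun a b h => ⟨h.1.symm, h.2.symm⟩
  have hperpsym : ∀ a b : V, perpR E a b → perpR E b a :=
    fun a b h => ⟨h.1.symm, h.2.2, h.2.1⟩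
  -- the weak component of x in M is everything
  have hCstrong : IsStrongGraphModule E (reachIn (adjR E) M x) := by
    refine reach_strong hMstrong hxM hadjsym (adj_reach_module hMmod x) ?_
    intro a c b haK hbM hbK hcK hiff1 hiff2
    obtain ⟨e1, e2⟩ := adj_out hcK hbM hbK
    rintro ⟨-, h | h⟩
    · exact e2 (hiff1.mp h)
    · exact e1 (hiff2.mp h)
  have hMC : M ⊆ reachIn (adjR E) M x := by
    refine hmin _ hCstrong ⟨hxM, .refl⟩ ⟨hyM, Relation.ReflTransGen.single ?_⟩
    exact ⟨hxM, hyM, hxy, Or.inl hExy⟩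
  have hconnA : ConnIn (adjR E) M := by
    intro u hu v hv
    have hu' := hMC hu
    have hv' := hMC hv
    exact (rtg_symm_s17 hadjsym hu'.2).trans hv'.2
  have hconn : ConnectedOn E M := by
    intro u hu v hv
    exact Relation.ReflTransGen.mono (p := fun a b => a ∈ M ∧ b ∈ M ∧ (E a b ∨ E b a)) (fun a b h => ⟨h.1, h.2.1, h.2.2.2⟩) u v (hconnA u hu v hv)
  have hcard : 2 ≤ M.ncard := by
    have hsub : ({x, y} : Set V) ⊆ M := by
      intro w hw; rcases hw with rfl | rfl
      · exact hxM
      · exact hyM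
    calc 2 = ({x, y} : Set V).ncard := (Set.ncard_pair hxy).symm
    _ ≤ M.ncard := Set.ncard_le_ncard hsub (Set.toFinite M)
  refine ⟨M, ⟨hMstrong, hcard, hconn⟩, hxM, hyM, ?_⟩
  -- suppose z ∈ M
  intro hzM
  have hKstrong : IsStrongGraphModule E (reachIn (perpR E) M z) := by
    refine reach_strong hMstrong hzM hperpsym (perp_reach_module hD hMmod z) ?_
    intro a c b haK hbM hbK hcK hiff1 hiff2
    rintro ⟨-, e1, e2⟩
    rcases perp_out hcK hbM hbK with h | h
    · exact e2 (hiff2.mpr h)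
    · exact e1 (hiff1.mpr h)
  have hxK : x ∈ reachIn (perpR E) M z :=
    ⟨hxM, Relation.ReflTransGen.single ⟨hzM, hxM, hxz.symm, hnzx, hnxz⟩⟩
  have hyK : y ∈ reachIn (perpR E) M z :=
    ⟨hyM, Relation.ReflTransGen.single ⟨hzM, hyM, hyz.symm, hnzy, hnyz⟩⟩
  have hMK : M ⊆ reachIn (perpR E) M z := hmin _ hKstrong hxK hyK
  have hconnB : ConnIn (fun a b => a ≠ b ∧ ¬adjR E a b) M := by
    intro u hu v hv
    have hu' := hMK hu
    have hv' := hMK hv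
    refine Relation.ReflTransGen.mono (p := stepIn (fun a b => a ≠ b ∧ ¬adjR E a b) M) (fun a b h => ?_) u v ((rtg_symm_s17 hperpsym hu'.2).trans hv'.2)
    exact ⟨h.1, h.2.1, h.2.2.1, fun hadj => hadj.2.elim h.2.2.2.1 h.2.2.2.2⟩
  have hP4A : ∀ a b c d : V, a ≠ c → a ≠ d → b ≠ d → adjR E a b → adjR E b c →
      adjR E c d → ¬adjR E a c → ¬adjR E a d → ¬adjR E b d → False := by
    intro a b c d nac nad nbd hab hbc hcd hnac hnad hnbd
    have eac : ¬E a c ∧ ¬E c a := by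
      constructor <;> intro h <;> exact hnac ⟨nac, by tauto⟩
    have ead : ¬E a d ∧ ¬E d a := by
      constructor <;> intro h <;> exact hnad ⟨nad, by tauto⟩
    have ebd : ¬E b d ∧ ¬E d b := by
      constructor <;> intro h <;> exact hnbd ⟨nbd, by tauto⟩
    exact p4free hD hab.1 nac nad hbc.1 nbd hcd.1 hab.2 hbc.2 hcd.2
      eac.1 eac.2 ead.1 ead.2 ebd.1 ebd.2
  exact seinsche hadjsym (fun a h => h.1 rfl) hP4A M.ncard M le_rfl hcard hconnA hconnB

end Main
theorem not_U2_overlapping_clusters' {V Υ : Type*} [Fintype V]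
    (φ : V → V → Υ) (hrev : Reversible φ) (hU1 : CondU1 φ)
    (hU2 : ¬ CondU2 φ) :
    ∃ M ∈ OneClusters φ, ∃ N ∈ OneClusters φ, Overlap M N := by
  classical
  rw [CondU2] at hU2
  push_neg at hU2
  obtain ⟨x, y, z, hxy, hxz, hyz, hcard⟩ := hU2
  have hle : ∀ a b : Set Υ, ({a, b} : Set (Set Υ)).ncard ≤ 2 := by
    intro a b
    exact (Set.ncard_insert_le a {b}).trans (by simp)
  have hsub : ∀ {A : Set (Set Υ)} {a b : Set Υ}, A ⊆ {a, b} → ¬ (2 < A.ncard) := by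
    intro A a b hAB h
    have hfin : ({a, b} : Set (Set Υ)).Finite :=
      (Set.finite_singleton b).insert a
    exact absurd ((Set.ncard_le_ncard hAB hfin).trans (hle a b)) (by omega)
  have h12 : Dset φ x y ≠ Dset φ x z := by
    intro h
    refine hsub (a := Dset φ x z) (b := Dset φ y z) ?_ hcard
    intro w hw
    rcases hw with rfl | rfl | rfl <;> simp [h]
  have h13 : Dset φ x y ≠ Dset φ y z := by
    intro h
    refine hsub (a := Dset φ x z) (b := Dset φ y z) ?_ hcard
    intro w hw
    rcases hw with rfl | rfl | rfl <;> simp [h]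
  have h23 : Dset φ x z ≠ Dset φ y z := by
    intro h
    refine hsub (a := Dset φ x y) (b := Dset φ y z) ?_ hcard
    intro w hw
    rcases hw with rfl | rfl | rfl <;> simp [h]
  obtain ⟨M, hM1c, hxM, hyM, hzM⟩ := key_cluster φ hrev hU1 hxy hxz hyz h12 h13
  have h2' : Dset φ x z ≠ Dset φ z y := by
    rw [Dset_comm φ z y]
    exact h23
  obtain ⟨N, hN1c, hxN, hzN, hyN⟩ :=
    key_cluster φ hrev hU1 hxz hxy hyz.symm h12.symm h2'
  exact ⟨M, Or.inl ⟨φ x y, hM1c⟩, N, Or.inl ⟨φ x z, hN1c⟩,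
    ⟨x, hxM, hxN⟩, fun h => hyN (h hyM), fun h => hzM (h hzN)⟩


/-- If a reversible 2-structure satisfies (U1) but violates (U2), then the
collection `C¹(g)` of 1-clusters is not a hierarchy: it contains two
overlapping clusters. -/
theorem not_U2_overlapping_clusters {V Υ : Type*} [Fintype V]
    (φ : V → V → Υ) (hrev : Reversible φ) (hU1 : CondU1 φ)
    (hU2 : ¬ CondU2 φ) :
    ∃ M ∈ OneClusters φ, ∃ N ∈ OneClusters φ, Overlap M N := by
  exact not_U2_overlapping_clusters' φ hrev hU1 hU2
end

section
/- If g is a reversible uniformly non-prime 2-structure then each cluster M in C¹(g) is a 1-cluster in at most two different cotrees: if the tree representation labels the strong module M by the pair (i, j), then M is a 1-cluster of T_i and of T_j, and for every label k ∉ {i, j}, M is not a 1-cluster of T_k. -/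
section AuxLemmas

variable {V Υ : Type*}

lemma strong_nested {φ : V → V → Υ} {A B : Set V}
    (hA : IsStrongModule φ A) (hB : IsStrongModule φ B)
    (h : (A ∩ B).Nonempty) : A ⊆ B ∨ B ⊆ A := by
  by_contra h'
  push_neg at h'
  exact hA.2 B hB.1 ⟨h, h'.1, h'.2⟩

lemma univ_strong_s19 (φ : V → V → Υ) (v : V) : IsStrongModule φ (Set.univ : Set V) :=
  ⟨⟨⟨v, trivial⟩, fun _ _ _ _ z hz => absurd (Set.mem_univ z) hz⟩,
   fun N _ hov => hov.2.2 (Set.subset_univ N)⟩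

lemma exists_lca [Fintype V] (φ : V → V → Υ) (x y : V) :
    ∃ L, IsLcaModule φ x y L := by
  classical
  have hne : ({N | IsStrongModule φ N ∧ x ∈ N ∧ y ∈ N} : Set (Set V)).Nonempty :=
    ⟨Set.univ, univ_strong_s19 φ x, trivial, trivial⟩
  obtain ⟨L, hLS, hmin⟩ := Set.Finite.exists_minimalFor id
    {N | IsStrongModule φ N ∧ x ∈ N ∧ y ∈ N} (Set.toFinite _) hne
  refine ⟨L, hLS.1, hLS.2.1, hLS.2.2, fun N hN hx hy => ?_⟩
  rcases strong_nested hLS.1 hN ⟨x, hLS.2.1, hx⟩ with h | h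
  · exact h
  · exact hmin ⟨hN, hx, hy⟩ h

lemma exists_lca_pair [Fintype V] {φ : V → V → Υ} {M : Set V}
    (hM : IsStrongModule φ M) {A B : Set V}
    (hA : A.Nonempty) (hB : B.Nonempty) (hAM : A ⊆ M) (hBM : B ⊆ M)
    (hcov : M ⊆ A ∪ B) :
    ∃ a ∈ A, ∃ b ∈ B, IsLcaModule φ a b M := by
  classical
  by_contra hcon
  push_neg at hcon
  have h' : ∀ a ∈ A, ∀ b ∈ B, ∃ C, IsStrongModule φ C ∧ a ∈ C ∧ b ∈ C ∧ ¬ M ⊆ C := by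
    intro a ha b hb
    have h1 := hcon a ha b hb
    by_contra h2
    push_neg at h2
    exact h1 ⟨hM, hAM ha, hBM hb, h2⟩
  obtain ⟨a₀, ha₀⟩ := hA
  obtain ⟨b₀, hb₀⟩ := hB
  obtain ⟨C₀, hC₀s, hC₀a, hC₀b, hC₀M⟩ := h' a₀ ha₀ b₀ hb₀
  obtain ⟨Cs, hCsT, hmax⟩ := Set.Finite.exists_maximalFor id
    {C | IsStrongModule φ C ∧ a₀ ∈ C ∧ ¬ M ⊆ C} (Set.toFinite _)
    ⟨C₀, hC₀s, hC₀a, hC₀M⟩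
  have absorb : ∀ C, IsStrongModule φ C → a₀ ∈ C → ¬ M ⊆ C → C ⊆ Cs := by
    intro C hCs' haC hCM
    rcases strong_nested hCs' hCsT.1 ⟨a₀, haC, hCsT.2.1⟩ with h1 | h1
    · exact h1
    · exact hmax ⟨hCs', haC, hCM⟩ h1
  have hb₀Cs : b₀ ∈ Cs := absorb C₀ hC₀s hC₀a hC₀M hC₀b
  have hMCs : M ⊆ Cs := by
    intro z hz
    rcases hcov hz with hzA | hzB
    · obtain ⟨C, hCs', hzC, hbC, hCM⟩ := h' z hzA b₀ hb₀
      rcases strong_nested hCs' hCsT.1 ⟨b₀, hbC, hb₀Cs⟩ with h1 | h1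
      · exact h1 hzC
      · exact (hmax ⟨hCs', h1 hCsT.2.1, hCM⟩ h1) hzC
    · obtain ⟨C, hCs', haC, hzC, hCM⟩ := h' a₀ ha₀ z hzB
      exact absorb C hCs' haC hCM hzC
  exact hCsT.2.2 hMCs

end AuxLemmas

section Triple
variable {V Υ : Type*}

lemma triple_step [Fintype V] {φ : V → V → Υ} (hrev : Reversible φ) (hunp : Unp φ)
    {i : Υ} {a c z : V} (hac : a ≠ c) (haz : a ≠ z) (hcz : c ≠ z)
    (hpq : φ a c = i ∨ φ c a = i)
    (hγ : φ c z = i ↔ φ a z = i) (hδ : φ z c = i ↔ φ z a = i) :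
    φ c z = φ a z ∧ φ z c = φ z a := by
  classical
  have hfwd : φ c z = φ a z → φ z c = φ z a := fun h => hrev c z a z hcz haz h
  have hbwd : φ z c = φ z a → φ c z = φ a z := fun h => hrev z c z a hcz.symm haz.symm h
  have h3 : ({a, c, z} : Set V).ncard = 3 :=
    Set.ncard_eq_three.mpr ⟨a, c, z, hac, haz, hcz, rfl⟩
  have hnp := hunp {a, c, z} h3.symm.le
  rw [IsPrimeOn] at hnp
  push_neg at hnp
  obtain ⟨W, hWmod, hWne, hWsing, hWX⟩ := hnp
  have hmem : ∀ w ∈ W, w = a ∨ w = c ∨ w = z := fun w hw => by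
    have := hWmod.1 hw; simpa using this
  have hamem : a ∈ ({a, c, z} : Set V) := by simp
  have hcmem : c ∈ ({a, c, z} : Set V) := by simp
  have hzmem : z ∈ ({a, c, z} : Set V) := by simp
  by_cases haW : a ∈ W <;> by_cases hcW : c ∈ W <;> by_cases hzW : z ∈ W
  · -- all in: W = X, contradiction
    exact absurd (Set.Subset.antisymm hWmod.1
      (fun w hw => by
        simp only [Set.mem_insert_iff, Set.mem_singleton_iff] at hw
        rcases hw with rfl | rfl | rfl <;> assumption)) hWX
  · -- a, c ∈ W, z ∉ W
    obtain ⟨k1, k2⟩ := hWmod.2 a haW c hcW z ⟨hzmem, hzW⟩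
    exact ⟨k1.symm, k2.symm⟩
  · -- a, z ∈ W, c ∉ W
    obtain ⟨k1, k2⟩ := hWmod.2 a haW z hzW c ⟨hcmem, hcW⟩
    -- k1 : φ a c = φ z c, k2 : φ c a = φ c z
    rcases hpq with hp | hq
    · have hzc : φ z c = i := k1 ▸ hp
      have hza : φ z a = i := hδ.mp hzc
      have heq : φ z c = φ z a := hzc.trans hza.symm
      exact ⟨hbwd heq, heq⟩
    · have hcz' : φ c z = i := k2 ▸ hq
      have haz' : φ a z = i := hγ.mp hcz'
      have heq : φ c z = φ a z := hcz'.trans haz'.symm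
      exact ⟨heq, hfwd heq⟩
  · -- only a : W = {a}
    exact absurd (Set.eq_singleton_iff_unique_mem.mpr ⟨haW, fun w hw => by
      rcases hmem w hw with rfl | rfl | rfl
      · rfl
      · exact absurd hw hcW
      · exact absurd hw hzW⟩) (hWsing a)
  · -- c, z ∈ W, a ∉ W
    obtain ⟨k1, k2⟩ := hWmod.2 c hcW z hzW a ⟨hamem, haW⟩
    -- k1 : φ c a = φ z a, k2 : φ a c = φ a z
    rcases hpq with hp | hq
    · have haz' : φ a z = i := k2 ▸ hp
      have hcz' : φ c z = i := hγ.mpr haz'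
      have heq : φ c z = φ a z := hcz'.trans haz'.symm
      exact ⟨heq, hfwd heq⟩
    · have hza : φ z a = i := k1 ▸ hq
      have hzc : φ z c = i := hδ.mpr hza
      have heq : φ z c = φ z a := hzc.trans hza.symm
      exact ⟨hbwd heq, heq⟩
  · -- only c
    exact absurd (Set.eq_singleton_iff_unique_mem.mpr ⟨hcW, fun w hw => by
      rcases hmem w hw with rfl | rfl | rfl
      · exact absurd hw haW
      · rfl
      · exact absurd hw hzW⟩) (hWsing c)
  · -- only z
    exact absurd (Set.eq_singleton_iff_unique_mem.mpr ⟨hzW, fun w hw => by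
      rcases hmem w hw with rfl | rfl | rfl
      · exact absurd hw haW
      · exact absurd hw hcW
      · rfl⟩) (hWsing z)
  · -- empty
    obtain ⟨w, hw⟩ := hWne
    rcases hmem w hw with rfl | rfl | rfl
    · exact absurd hw haW
    · exact absurd hw hcW
    · exact absurd hw hzW

end Triple

section Main
variable {V Υ : Type*}

lemma oneCluster_of_label [Fintype V] {φ : V → V → Υ} (hrev : Reversible φ)
    (hunp : Unp φ) {M : Set V} (hM : IsStrongModule φ M) (h2 : 2 ≤ M.ncard) {i : Υ}
    (hlab : ∀ x ∈ M, ∀ y ∈ M, x ≠ y → IsLcaModule φ x y M →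
      φ x y = i ∨ φ y x = i) :
    IsOneCluster (Ggraph φ i) M := by
  classical
  have hMmod := hM.1.2
  -- M is a graph module of G_i
  have hgm : IsGraphModule (Ggraph φ i) M := by
    intro x hx y hy z hz
    obtain ⟨e1, e2⟩ := hMmod x hx y hy z hz
    have hxz : x ≠ z := fun h => hz (h ▸ hx)
    have hyz : y ≠ z := fun h => hz (h ▸ hy)
    constructor
    · constructor
      · rintro ⟨-, he⟩; exact ⟨hyz, e1 ▸ he⟩
      · rintro ⟨-, he⟩; exact ⟨hxz, e1.symm ▸ he⟩
    · constructor
      · rintro ⟨-, he⟩; exact ⟨hyz.symm, e2 ▸ he⟩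
      · rintro ⟨-, he⟩; exact ⟨hxz.symm, e2.symm ▸ he⟩
  -- hub pair with lca M
  obtain ⟨u, hu, v, hv, huv⟩ := (Set.one_lt_ncard (Set.toFinite M)).mp
    (lt_of_lt_of_le one_lt_two h2)
  obtain ⟨x₀, hx₀A, y₀, hy₀B, hlca₀⟩ := exists_lca_pair hM (A := {u}) (B := M \ {u})
    ⟨u, rfl⟩ ⟨v, hv, fun h => huv (Set.mem_singleton_iff.mp h).symm⟩
    (Set.singleton_subset_iff.mpr hu) Set.diff_subset
    (fun z hz => by
      by_cases h : z = u
      · exact Or.inl h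
      · exact Or.inr ⟨hz, h⟩)
  have hx₀M : x₀ ∈ M := hx₀A ▸ hu
  have hy₀M : y₀ ∈ M := hy₀B.1
  have hx₀y₀ : x₀ ≠ y₀ := fun h => hy₀B.2 (h ▸ hx₀A)
  -- connectivity
  have hedge : ∀ p ∈ M, ∀ q ∈ M, p ≠ q → IsLcaModule φ p q M →
      (p ∈ M ∧ q ∈ M ∧ (Ggraph φ i p q ∨ Ggraph φ i q p)) := by
    intro p hp q hq hpq hl
    rcases hlab p hp q hq hpq hl with h | h
    · exact ⟨hp, hq, Or.inl ⟨hpq, h⟩⟩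
    · exact ⟨hp, hq, Or.inr ⟨hpq.symm, h⟩⟩
  have hRsymm : Symmetric (fun p q => p ∈ M ∧ q ∈ M ∧
      (Ggraph φ i p q ∨ Ggraph φ i q p)) := fun p q h => ⟨h.2.1, h.1, h.2.2.symm⟩
  have hsingle : ∀ p q : V, (p ∈ M ∧ q ∈ M ∧ (Ggraph φ i p q ∨ Ggraph φ i q p)) →
      Relation.ReflTransGen (fun p q => p ∈ M ∧ q ∈ M ∧
        (Ggraph φ i p q ∨ Ggraph φ i q p)) p q :=
    fun _ _ h => Relation.ReflTransGen.single h
  have hreach : ∀ z ∈ M, Relation.ReflTransGen (fun p q => p ∈ M ∧ q ∈ M ∧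
      (Ggraph φ i p q ∨ Ggraph φ i q p)) x₀ z := by
    intro z hz
    by_cases hzx : z = x₀
    · exact hzx ▸ Relation.ReflTransGen.refl
    by_cases hzy : z = y₀
    · exact hzy ▸ hsingle x₀ y₀ (hedge x₀ hx₀M y₀ hy₀M hx₀y₀ hlca₀)
    have hor : IsLcaModule φ z x₀ M ∨ IsLcaModule φ z y₀ M := by
      by_contra hcc
      push_neg at hcc
      have e1 : ∃ C, IsStrongModule φ C ∧ z ∈ C ∧ x₀ ∈ C ∧ ¬ M ⊆ C := by
        by_contra h'; push_neg at h'
        exact hcc.1 ⟨hM, hz, hx₀M, h'⟩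
      have e2 : ∃ C, IsStrongModule φ C ∧ z ∈ C ∧ y₀ ∈ C ∧ ¬ M ⊆ C := by
        by_contra h'; push_neg at h'
        exact hcc.2 ⟨hM, hz, hy₀M, h'⟩
      obtain ⟨C1, hC1, hzC1, hxC1, hMC1⟩ := e1
      obtain ⟨C2, hC2, hzC2, hyC2, hMC2⟩ := e2
      rcases strong_nested hC1 hC2 ⟨z, hzC1, hzC2⟩ with h | h
      · exact hMC2 (hlca₀.2.2.2 C2 hC2 (h hxC1) hyC2)
      · exact hMC1 (hlca₀.2.2.2 C1 hC1 hxC1 (h hyC2))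
    rcases hor with h | h
    · exact hsingle x₀ z (hRsymm (hedge z hz x₀ hx₀M hzx h))
    · exact Relation.ReflTransGen.trans
        (hsingle x₀ y₀ (hedge x₀ hx₀M y₀ hy₀M hx₀y₀ hlca₀))
        (hsingle y₀ z (hRsymm (hedge z hz y₀ hy₀M hzy h)))
  have hconn : ConnectedOn (Ggraph φ i) M := by
    intro x hx y hy
    exact Relation.ReflTransGen.trans
      (by haveI : Std.Symm (fun p q : V => p ∈ M ∧ q ∈ M ∧ (Ggraph φ i p q ∨ Ggraph φ i q p)) := ⟨fun a b h => hRsymm h⟩; exact Relation.ReflTransGen.symmetric.symm _ _ (hreach x hx)) (hreach y hy)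
  -- strongness
  have hstrong : ∀ N : Set V, IsGraphModuleNe (Ggraph φ i) N → ¬ Overlap M N := by
    intro N hN hover
    obtain ⟨hint, hMN, hNM⟩ := hover
    obtain ⟨c, hcN, hcM⟩ := Set.not_subset.mp hNM
    obtain ⟨b', hb'M, hb'N⟩ := Set.not_subset.mp hMN
    obtain ⟨a, haA, b, hbB, hlcab⟩ := exists_lca_pair hM (A := M ∩ N) (B := M \ N)
      hint ⟨b', hb'M, hb'N⟩ Set.inter_subset_left Set.diff_subset
      (fun z hz => by
        by_cases h : z ∈ N
        · exact Or.inl ⟨hz, h⟩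
        · exact Or.inr ⟨hz, h⟩)
    obtain ⟨haM, haN⟩ := haA
    obtain ⟨hbM, hbN⟩ := hbB
    have hab : a ≠ b := fun h => hbN (h ▸ haN)
    have hi : φ a b = i ∨ φ b a = i := hlab a haM b hbM hab hlcab
    have hNgm := hN.2
    have key : ∀ x ∈ N, ∀ z, z ∉ N → φ x z = φ a z ∧ φ z x = φ z a := by
      intro x hxN z hzN
      by_cases hxa : x = a
      · exact hxa ▸ ⟨rfl, rfl⟩
      have hxz : x ≠ z := fun h => hzN (h ▸ hxN)
      have haz : a ≠ z := fun h => hzN (h ▸ haN)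
      rcases hi with hi1 | hi1
      · -- φ a b = i : every c' ∈ N \ M points to all of M with label i
        have hout : ∀ c' ∈ N, c' ∉ M → ∀ m ∈ M, φ c' m = i := by
          intro c' hc'N hc'M m hm
          have h1 := ((hNgm a haN c' hc'N b hbN).1.mp ⟨hab, hi1⟩).2
          exact ((hMmod m hm b hbM c' hc'M).2).trans h1
        by_cases hzM : z ∈ M
        · have hall : ∀ w ∈ N, φ w z = i := by
            intro w hwN
            have hEcz : Ggraph φ i c z := ⟨fun h => hcM (h ▸ hzM), hout c hcN hcM z hzM⟩
            exact ((hNgm w hwN c hcN z hzN).1.mpr hEcz).2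
          have h1 : φ x z = φ a z := (hall x hxN).trans (hall a haN).symm
          exact ⟨h1, hrev x z a z hxz haz h1⟩
        · by_cases hxM : x ∈ M
          · exact hMmod x hxM a haM z hzM
          · have hax : a ≠ x := fun h => hxM (h ▸ haM)
            have hpq : φ a x = i ∨ φ x a = i := Or.inr (hout x hxN hxM a haM)
            have hγ : φ x z = i ↔ φ a z = i := by
              have hh := (hNgm x hxN a haN z hzN).1
              exact ⟨fun h => (hh.mp ⟨hxz, h⟩).2, fun h => (hh.mpr ⟨haz, h⟩).2⟩
            have hδ : φ z x = i ↔ φ z a = i := by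
              have hh := (hNgm x hxN a haN z hzN).2
              exact ⟨fun h => (hh.mp ⟨hxz.symm, h⟩).2, fun h => (hh.mpr ⟨haz.symm, h⟩).2⟩
            exact triple_step hrev hunp hax haz hxz hpq hγ hδ
      · -- φ b a = i : every c' ∈ N \ M receives label i from all of M
        have hin : ∀ c' ∈ N, c' ∉ M → ∀ m ∈ M, φ m c' = i := by
          intro c' hc'N hc'M m hm
          have h1 := ((hNgm a haN c' hc'N b hbN).2.mp ⟨hab.symm, hi1⟩).2
          exact ((hMmod m hm b hbM c' hc'M).1).trans h1
        by_cases hzM : z ∈ M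
        · have hall : ∀ w ∈ N, φ z w = i := by
            intro w hwN
            have hEzc : Ggraph φ i z c := ⟨fun h => hcM (h.symm ▸ hzM), hin c hcN hcM z hzM⟩
            exact ((hNgm w hwN c hcN z hzN).2.mpr hEzc).2
          have h1 : φ z x = φ z a := (hall x hxN).trans (hall a haN).symm
          exact ⟨hrev z x z a hxz.symm haz.symm h1, h1⟩
        · by_cases hxM : x ∈ M
          · exact hMmod x hxM a haM z hzM
          · have hax : a ≠ x := fun h => hxM (h ▸ haM)
            have hpq : φ a x = i ∨ φ x a = i := Or.inl (hin x hxN hxM a haM)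
            have hγ : φ x z = i ↔ φ a z = i := by
              have hh := (hNgm x hxN a haN z hzN).1
              exact ⟨fun h => (hh.mp ⟨hxz, h⟩).2, fun h => (hh.mpr ⟨haz, h⟩).2⟩
            have hδ : φ z x = i ↔ φ z a = i := by
              have hh := (hNgm x hxN a haN z hzN).2
              exact ⟨fun h => (hh.mp ⟨hxz.symm, h⟩).2, fun h => (hh.mpr ⟨haz.symm, h⟩).2⟩
            exact triple_step hrev hunp hax haz hxz hpq hγ hδ
    have hNmod : IsModuleNe φ N := ⟨⟨a, haN⟩, fun x hx y hy z hz => by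
      obtain ⟨k1, k2⟩ := key x hx z hz
      obtain ⟨k3, k4⟩ := key y hy z hz
      exact ⟨k1.trans k3.symm, k2.trans k4.symm⟩⟩
    exact hM.2 N hNmod ⟨hint, hMN, hNM⟩
  exact ⟨⟨⟨hM.1.1, hgm⟩, hstrong⟩, h2, hconn⟩

end Main

/-- In a reversible uniformly non-prime 2-structure, a strong module `M`
labeled by the pair `(i, j)` in the tree representation is a 1-cluster of the
cotrees `T_i` and `T_j`, and of no other cotree `T_k`. -/
theorem oneCluster_in_at_most_two_cotrees {V Υ : Type*} [Fintype V]
    (φ : V → V → Υ) (hrev : Reversible φ) (hunp : Unp φ)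
    (M : Set V) (hM : IsStrongModule φ M) (h2 : 2 ≤ M.ncard) (i j : Υ)
    (hlabel : ∀ x ∈ M, ∀ y ∈ M, x ≠ y → IsLcaModule φ x y M →
      (φ x y = i ∧ φ y x = j) ∨ (φ x y = j ∧ φ y x = i))
    (hattained : ∃ x ∈ M, ∃ y ∈ M, x ≠ y ∧ IsLcaModule φ x y M ∧
      φ x y = i ∧ φ y x = j) :
    IsOneCluster (Ggraph φ i) M ∧ IsOneCluster (Ggraph φ j) M ∧
      ∀ k : Υ, k ≠ i → k ≠ j → ¬ IsOneCluster (Ggraph φ k) M := by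
  classical
  have hlabi : ∀ x ∈ M, ∀ y ∈ M, x ≠ y → IsLcaModule φ x y M →
      φ x y = i ∨ φ y x = i := by
    intro x hx y hy hne hl
    rcases hlabel x hx y hy hne hl with ⟨h, -⟩ | ⟨-, h⟩
    · exact Or.inl h
    · exact Or.inr h
  have hlabj : ∀ x ∈ M, ∀ y ∈ M, x ≠ y → IsLcaModule φ x y M →
      φ x y = j ∨ φ y x = j := by
    intro x hx y hy hne hl
    rcases hlabel x hx y hy hne hl with ⟨-, h⟩ | ⟨h, -⟩
    · exact Or.inr h
    · exact Or.inl h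
  refine ⟨oneCluster_of_label hrev hunp hM h2 hlabi,
    oneCluster_of_label hrev hunp hM h2 hlabj, ?_⟩
  intro k hki hkj hclus
  obtain ⟨x₁, hx₁, y₁, hy₁, hxy₁, hlca₁, -, -⟩ := hattained
  have hconn := hclus.2.2 x₁ hx₁ y₁ hy₁
  have step : ∀ p q : V, p ∈ M → q ∈ M → (Ggraph φ k p q ∨ Ggraph φ k q p) →
      ∃ C, IsStrongModule φ C ∧ p ∈ C ∧ q ∈ C ∧ ¬ M ⊆ C := by
    intro p q hp hq he
    have hpq : p ≠ q := by
      rcases he with ⟨h, -⟩ | ⟨h, -⟩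
      · exact h
      · exact h.symm
    obtain ⟨L, hL⟩ := exists_lca φ p q
    by_cases hML : M ⊆ L
    · exfalso
      have hLeq : L = M := Set.Subset.antisymm (hL.2.2.2 M hM hp hq) hML
      have hlm : IsLcaModule φ p q M := hLeq ▸ hL
      rcases hlabel p hp q hq hpq hlm with ⟨h1, h2⟩ | ⟨h1, h2⟩ <;>
        rcases he with ⟨-, h3⟩ | ⟨-, h3⟩
      · exact hki (h3.symm.trans h1)
      · exact hkj (h3.symm.trans h2)
      · exact hkj (h3.symm.trans h1)
      · exact hki (h3.symm.trans h2)
    · exact ⟨L, hL.1, hL.2.1, hL.2.2.1, hML⟩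
  have main : ∀ w, Relation.ReflTransGen (fun a b => a ∈ M ∧ b ∈ M ∧
      (Ggraph φ k a b ∨ Ggraph φ k b a)) x₁ w →
      w = x₁ ∨ ∃ C, IsStrongModule φ C ∧ x₁ ∈ C ∧ w ∈ C ∧ ¬ M ⊆ C := by
    intro w h
    induction h with
    | refl => exact Or.inl rfl
    | tail h1 h2 ih =>
      obtain ⟨hpM, hqM, he⟩ := h2
      obtain ⟨C2, hC2, hpC2, hqC2, hMC2⟩ := step _ _ hpM hqM he
      rcases ih with rfl | ⟨C1, hC1, hxC1, hpC1, hMC1⟩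
      · exact Or.inr ⟨C2, hC2, hpC2, hqC2, hMC2⟩
      · rcases strong_nested hC1 hC2 ⟨_, hpC1, hpC2⟩ with hsub | hsub
        · exact Or.inr ⟨C2, hC2, hsub hxC1, hqC2, hMC2⟩
        · exact Or.inr ⟨C1, hC1, hxC1, hsub hqC2, hMC1⟩
  rcases main y₁ hconn with h | ⟨C, hC, hx, hy, hMC⟩
  · exact hxy₁ h.symm
  · exact hMC (hlca₁.2.2.2 C hC hx hy)
end
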